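/- arXiv:2410.10635 — 4 statements merged into one kernel-verified Lean document; each statement's English description precedes it below -/
import Mathlib

section
/- Let F be a field, N = a + b with a, b ≥ 0, and α = (n_1,…,n_k; r) with n_1+⋯+n_k+r = N. For T ∈ 𝒯^{P_α}_{a,b} given by the integers a_1,…,a_k, r_1, b_1,…,b_k, r_2, the following two identities of subgroups of Sp_N(F) hold: (1) σ̃_T P_α σ̃_T⁻¹ ∩ H_{a,b} = j(P_{(a_1,…,a_k; r_1)} × P_{(b_1,…,b_k; r_2)}), and (2) σ̃_T M_α σ̃_T⁻¹ ∩ H_{a,b} = j(M_{(a_1,…,a_k; r_1)} × M_{(b_1,…,b_k; r_2)}), where P_{(a_1,…,a_k; r_1)} and M_{(a_1,…,a_k; r_1)} are the standard parabolic and Levi subgroups of Sp_a(F) for the tuple (a_1,…,a_k; r_1) (entries equal to 0 being ignored), and similarly in Sp_b(F). -/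
open scoped MatrixGroups Matrix

namespace Stmt6

variable (F : Type*) [Field F]

/-- Extension of a tuple `n : Fin k → ℕ` by zero to all of `ℕ`. -/
def nExt {k : ℕ} (n : Fin k → ℕ) : ℕ → ℕ := fun i => if h : i < k then n ⟨i, h⟩ else 0

/-- Partial sums `ν_j = n 0 + ⋯ + n (j-1)`. -/
def psum {k : ℕ} (n : Fin k → ℕ) (j : ℕ) : ℕ := ∑ i ∈ Finset.range j, nExt n i

/-- Block index of a position `x` with respect to the composition `c` with `K` parts. -/
def blkIdxF (c : ℕ → ℕ) (K : ℕ) (x : ℕ) : ℕ :=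
  ((Finset.range K).filter (fun j => (∑ i ∈ Finset.range (j + 1), c i) ≤ x)).card

/-- The symplectic form `J_N = [[0, w_N], [-w_N, 0]]`, `w_N` the antidiagonal matrix. -/
def Jmat (N : ℕ) : Matrix (Fin (2 * N)) (Fin (2 * N)) F :=
  fun i j => if (i : ℕ) + (j : ℕ) = 2 * N - 1 then (if (i : ℕ) < N then 1 else -1) else 0

/-- The symplectic group `Sp_N(F) = { g ∈ GL_{2N}(F) : ᵗg J_N g = J_N }` (as a set). -/
def SpSet (N : ℕ) : Set (GL (Fin (2 * N)) F) :=
  { g | (g.val)ᵀ * Jmat F N * g.val = Jmat F N }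

/-- The composition `(n_1, …, n_k, 2r, n_k, …, n_1)` of `2N` underlying the standard
parabolic subgroup of `Sp_N` attached to `(n_1, …, n_k; r)`. -/
def cSp {k : ℕ} (n : Fin k → ℕ) (r : ℕ) : ℕ → ℕ :=
  fun i => if i < k then nExt n i else if i = k then 2 * r else nExt n (2 * k - i)

/-- The standard parabolic subgroup `P_{(n_1,…,n_k;r)}` of `Sp_N` (as a set): block upper
triangular symplectic matrices with diagonal blocks `n_1, …, n_k, 2r, n_k, …, n_1`. -/
def PparSp (N : ℕ) {k : ℕ} (n : Fin k → ℕ) (r : ℕ) : Set (GL (Fin (2 * N)) F) :=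
  { g | g ∈ SpSet F N ∧ ∀ i j : Fin (2 * N),
      blkIdxF (cSp n r) (2 * k + 1) (j : ℕ) < blkIdxF (cSp n r) (2 * k + 1) (i : ℕ) →
        g.val i j = 0 }

/-- The standard Levi subgroup `M_{(n_1,…,n_k;r)}` of `Sp_N` (as a set). -/
def MparSp (N : ℕ) {k : ℕ} (n : Fin k → ℕ) (r : ℕ) : Set (GL (Fin (2 * N)) F) :=
  { g | g ∈ SpSet F N ∧ ∀ i j : Fin (2 * N),
      blkIdxF (cSp n r) (2 * k + 1) (j : ℕ) ≠ blkIdxF (cSp n r) (2 * k + 1) (i : ℕ) →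
        g.val i j = 0 }

/-- The doubled permutation `σ̃` of `[0, 2N)` attached to `σ ∈ S_N`:
`i ↦ σ i` and `2N - 1 - i ↦ 2N - 1 - σ i` for `i < N`. -/
def dPerm (N : ℕ) (σ : Equiv.Perm (Fin N)) : Equiv.Perm (Fin (2 * N)) :=
  (Equiv.permCongr (finSumFinEquiv.trans (finCongr (two_mul N).symm)))
    (Equiv.sumCongr σ (Fin.revPerm.trans (σ.trans Fin.revPerm)))

/-- The matrix `j(h₁, h₂)`: for `h₁ = [[A, B], [C, D]]` of size `2a × 2a` (blocks of size
`a × a`) and `h₂` of size `2b × 2b`, the `2(a+b) × 2(a+b)` matrix with `A, B, C, D` in the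
four corner `a × a` blocks and `h₂` in the central `2b × 2b` block. -/
def jEmbed (a b : ℕ) (h1 : Matrix (Fin (2 * a)) (Fin (2 * a)) F)
    (h2 : Matrix (Fin (2 * b)) (Fin (2 * b)) F) :
    Matrix (Fin (2 * (a + b))) (Fin (2 * (a + b))) F := fun x y =>
  if hx : (x : ℕ) < a then
    if hy : (y : ℕ) < a then h1 ⟨(x : ℕ), by omega⟩ ⟨(y : ℕ), by omega⟩
    else if hy2 : a + 2 * b ≤ (y : ℕ) then
      h1 ⟨(x : ℕ), by omega⟩ ⟨(y : ℕ) - 2 * b, by have := y.isLt; omega⟩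
    else 0
  else if hx2 : a + 2 * b ≤ (x : ℕ) then
    if hy : (y : ℕ) < a then
      h1 ⟨(x : ℕ) - 2 * b, by have := x.isLt; omega⟩ ⟨(y : ℕ), by omega⟩
    else if hy2 : a + 2 * b ≤ (y : ℕ) then
      h1 ⟨(x : ℕ) - 2 * b, by have := x.isLt; omega⟩ ⟨(y : ℕ) - 2 * b, by have := y.isLt; omega⟩
    else 0
  else
    if hy : a ≤ (y : ℕ) ∧ (y : ℕ) < a + 2 * b then
      h2 ⟨(x : ℕ) - a, by omega⟩ ⟨(y : ℕ) - a, by omega⟩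
    else 0

/-- Upper triangular invertible matrices. -/
def UTSet (M : ℕ) : Set (GL (Fin M) F) :=
  { g | ∀ i j : Fin M, (j : ℕ) < (i : ℕ) → g.val i j = 0 }

/-- The subgroup `H_{a,b} = j(Sp_a × Sp_b)` of `Sp_{a+b}` (as a set). -/
def HSet (a b : ℕ) : Set (GL (Fin (2 * (a + b))) F) :=
  { g | ∃ h1 : GL (Fin (2 * a)) F, h1 ∈ SpSet F a ∧
        ∃ h2 : GL (Fin (2 * b)) F, h2 ∈ SpSet F b ∧ g.val = jEmbed F a b h1.val h2.val }

/-- The subgroup `P₀^H = j(B_a × B_b)`, `B_c` the upper triangular subgroup of `Sp_c`. -/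
def P0HSp (a b : ℕ) : Set (GL (Fin (2 * (a + b))) F) :=
  { g | ∃ h1 : GL (Fin (2 * a)) F, h1 ∈ SpSet F a ∩ UTSet F (2 * a) ∧
        ∃ h2 : GL (Fin (2 * b)) F, h2 ∈ SpSet F b ∩ UTSet F (2 * b) ∧
          g.val = jEmbed F a b h1.val h2.val }

/-- A monomial matrix: exactly one nonzero entry in each row and in each column. -/
def IsMonomial {M : ℕ} (A : Matrix (Fin M) (Fin M) F) : Prop :=
  (∀ i, ∃! j, A i j ≠ 0) ∧ (∀ j, ∃! i, A i j ≠ 0)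

/-- Conjugation `g S g⁻¹` of a set by a group element. -/
def conjSet {M : ℕ} (g : GL (Fin M) F) (S : Set (GL (Fin M) F)) : Set (GL (Fin M) F) :=
  (fun h => g * h * g⁻¹) '' S

/-- Conjugation `σ S σ⁻¹` by the permutation matrix of `σ`. -/
def conjPerm {M : ℕ} (σ : Equiv.Perm (Fin M)) (S : Set (GL (Fin M) F)) :
    Set (GL (Fin M) F) :=
  { g | ∃ p ∈ S, g.val = (p.val).submatrix σ.symm σ.symm }

def blkPair {k : ℕ} (aT bT : Fin k → ℕ) (x : ℕ) : ℕ :=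
  ((Finset.range k).filter (fun j => psum aT (j + 1) + psum bT (j + 1) ≤ x)).card

def isBTab {k : ℕ} (aT bT : Fin k → ℕ) (x : ℕ) : Bool :=
  decide (psum aT (blkPair aT bT x + 1) + psum bT (blkPair aT bT x) ≤ x)

/-- The permutation `σ_T` attached to a table `T = (aT, bT)` (GL recipe). -/
noncomputable def sigmaTab (N : ℕ) {k : ℕ} (aT bT : Fin k → ℕ) : Equiv.Perm (Fin N) :=
  (Tuple.sort (fun x : Fin N => isBTab aT bT (x : ℕ)))⁻¹

/-! ### Arithmetic helper lemmas -/

lemma psum_succ {k : ℕ} (c : Fin k → ℕ) (j : ℕ) : psum c (j + 1) = psum c j + nExt c j :=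
  Finset.sum_range_succ _ j

lemma psum_mono {k : ℕ} (c : Fin k → ℕ) : Monotone (psum c) := fun _ _ h =>
  Finset.sum_le_sum_of_subset (Finset.range_subset_range.2 h)

lemma psum_total {k : ℕ} (c : Fin k → ℕ) : psum c k = ∑ i, c i := by
  rw [psum, ← Fin.sum_univ_eq_sum_range]
  exact Finset.sum_congr rfl fun i _ => by simp [nExt, i.isLt]

lemma sum_range_mono (c : ℕ → ℕ) : Monotone (fun j => ∑ i ∈ Finset.range j, c i) :=
  fun _ _ h => Finset.sum_le_sum_of_subset (Finset.range_subset_range.2 h)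

lemma blkIdxF_eq (c : ℕ → ℕ) {K t x : ℕ} (ht : t ≤ K)
    (h1 : ∑ i ∈ Finset.range t, c i ≤ x) (h2 : x < ∑ i ∈ Finset.range (t + 1), c i) :
    blkIdxF c K x = t := by
  have hfil : ((Finset.range K).filter (fun j => (∑ i ∈ Finset.range (j + 1), c i) ≤ x))
      = Finset.range t := by
    ext j
    simp only [Finset.mem_filter, Finset.mem_range]
    constructor
    · rintro ⟨hjK, hj⟩
      by_contra hjt
      have := sum_range_mono c (show t + 1 ≤ j + 1 by omega)
      simp only at this
      omega
    · intro hjt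
      have := sum_range_mono c (show j + 1 ≤ t by omega)
      simp only at this
      exact ⟨by omega, by omega⟩
  rw [blkIdxF, hfil, Finset.card_range]

lemma blkIdxF_mono (c : ℕ → ℕ) (K : ℕ) : Monotone (blkIdxF c K) := by
  intro x y hxy
  apply Finset.card_le_card
  intro j hj
  simp only [Finset.mem_filter, Finset.mem_range] at hj ⊢
  exact ⟨hj.1, le_trans hj.2 hxy⟩

lemma blkPair_eq {k : ℕ} (aT bT : Fin k → ℕ) {t x : ℕ} (ht : t ≤ k)
    (h1 : psum aT t + psum bT t ≤ x) (h2 : x < psum aT (t + 1) + psum bT (t + 1)) :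
    blkPair aT bT x = t := by
  have hfil : ((Finset.range k).filter (fun j => psum aT (j + 1) + psum bT (j + 1) ≤ x))
      = Finset.range t := by
    ext j
    simp only [Finset.mem_filter, Finset.mem_range]
    constructor
    · rintro ⟨hjK, hj⟩
      by_contra hjt
      have h3 := psum_mono aT (show t + 1 ≤ j + 1 by omega)
      have h4 := psum_mono bT (show t + 1 ≤ j + 1 by omega)
      omega
    · intro hjt
      have h3 := psum_mono aT (show j + 1 ≤ t by omega)
      have h4 := psum_mono bT (show j + 1 ≤ t by omega)
      exact ⟨by omega, by omega⟩
  rw [blkPair, hfil, Finset.card_range]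

lemma exists_blk (S : ℕ → ℕ) {K x : ℕ} (h0 : S 0 ≤ x) (hK : x < S K) :
    ∃ t, t < K ∧ S t ≤ x ∧ x < S (t + 1) := by
  induction K with
  | zero => omega
  | succ K ih =>
    by_cases h : x < S K
    · obtain ⟨t, h1, h2, h3⟩ := ih h
      exact ⟨t, by omega, h2, h3⟩
    · exact ⟨K, by omega, by omega, hK⟩

lemma cSp_sum_le {k : ℕ} (n : Fin k → ℕ) (r : ℕ) {j : ℕ} (hj : j ≤ k) :
    ∑ i ∈ Finset.range j, cSp n r i = psum n j :=
  Finset.sum_congr rfl fun i hi => by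
    rw [Finset.mem_range] at hi
    simp only [cSp, if_pos (show i < k by omega)]

lemma cSp_sum_ge {k : ℕ} (n : Fin k → ℕ) (r : ℕ) {s : ℕ} (hs : s ≤ k) :
    ∑ i ∈ Finset.range (k + 1 + s), cSp n r i + psum n (k - s) = 2 * psum n k + 2 * r := by
  induction s with
  | zero =>
    rw [Finset.sum_range_succ, cSp_sum_le n r le_rfl, Nat.sub_zero]
    have hc : cSp n r k = 2 * r := by simp [cSp]
    omega
  | succ s ih =>
    have hs' : s ≤ k := by omega
    have h1 : k + 1 + (s + 1) = (k + 1 + s) + 1 := by omega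
    rw [h1, Finset.sum_range_succ]
    have h2 : cSp n r (k + 1 + s) = nExt n (k - s - 1) := by
      simp only [cSp, if_neg (show ¬(k + 1 + s < k) by omega),
        if_neg (show ¬(k + 1 + s = k) by omega)]
      congr 1
      omega
    obtain ⟨m, hm⟩ : ∃ m, k - s = m + 1 := ⟨k - s - 1, by omega⟩
    have h3 : psum n (k - s) = psum n m + nExt n m := by rw [hm, psum_succ]
    have h4 : k - (s + 1) = m := by omega
    have h2' : cSp n r (k + 1 + s) = nExt n m := by
      have he : k - s - 1 = m := by omega
      rw [h2, he]
    rw [h2', h4]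
    omega
/-! ### dPerm lemmas -/

lemma dPerm_symm_inl (N : ℕ) (x : Fin (2 * N)) (hx : (x : ℕ) < N) :
    (finSumFinEquiv.trans (finCongr (two_mul N).symm)).symm x = Sum.inl ⟨(x : ℕ), hx⟩ := by
  rw [Equiv.symm_apply_eq]
  apply Fin.ext
  simp

lemma dPerm_symm_inr (N : ℕ) (x : Fin (2 * N)) (hx : N ≤ (x : ℕ)) :
    (finSumFinEquiv.trans (finCongr (two_mul N).symm)).symm x
      = Sum.inr ⟨(x : ℕ) - N, by have := x.isLt; omega⟩ := by
  rw [Equiv.symm_apply_eq]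
  apply Fin.ext
  simp
  omega

lemma dPerm_eq_lt (N : ℕ) (σ : Equiv.Perm (Fin N)) (x : Fin (2 * N)) (hx : (x : ℕ) < N) :
    dPerm N σ x = ⟨(σ ⟨(x : ℕ), hx⟩ : ℕ), by have := (σ ⟨(x : ℕ), hx⟩).isLt; omega⟩ := by
  rw [dPerm, Equiv.permCongr_apply, dPerm_symm_inl N x hx]
  apply Fin.ext
  simp

lemma dPerm_eq_ge (N : ℕ) (σ : Equiv.Perm (Fin N)) (x : Fin (2 * N)) (hx : N ≤ (x : ℕ))
    (h1 : 2 * N - 1 - (x : ℕ) < N) :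
    dPerm N σ x = ⟨2 * N - 1 - (σ ⟨2 * N - 1 - (x : ℕ), h1⟩ : ℕ),
      by have := (σ ⟨2 * N - 1 - (x : ℕ), h1⟩).isLt; have := x.isLt; omega⟩ := by
  rw [dPerm, Equiv.permCongr_apply, dPerm_symm_inr N x hx]
  apply Fin.ext
  have hrev : (Fin.revPerm (⟨(x : ℕ) - N, by have := x.isLt; omega⟩ : Fin N))
      = ⟨2 * N - 1 - (x : ℕ), h1⟩ := by
    apply Fin.ext
    simp [Fin.val_rev]
    omega
  simp only [Equiv.sumCongr_apply, Sum.map_inr, Equiv.coe_trans, Function.comp_apply, hrev]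
  have h2 := (σ ⟨2 * N - 1 - (x : ℕ), h1⟩).isLt
  simp [Fin.val_rev]
  omega

lemma dPerm_val_lt (N : ℕ) (σ : Equiv.Perm (Fin N)) (x : Fin (2 * N)) (hx : (x : ℕ) < N) :
    (dPerm N σ x : ℕ) = (σ ⟨(x : ℕ), hx⟩ : ℕ) := congrArg Fin.val (dPerm_eq_lt N σ x hx)

lemma dPerm_val_ge (N : ℕ) (σ : Equiv.Perm (Fin N)) (x : Fin (2 * N)) (hx : N ≤ (x : ℕ))
    (h1 : 2 * N - 1 - (x : ℕ) < N) :
    (dPerm N σ x : ℕ) = 2 * N - 1 - (σ ⟨2 * N - 1 - (x : ℕ), h1⟩ : ℕ) :=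
  congrArg Fin.val (dPerm_eq_ge N σ x hx h1)

lemma dPerm_symm (N : ℕ) (σ : Equiv.Perm (Fin N)) : (dPerm N σ).symm = dPerm N σ⁻¹ := by
  refine Equiv.ext fun x => ?_
  rw [Equiv.symm_apply_eq]
  apply Fin.ext
  by_cases hx : (x : ℕ) < N
  · have h1 : (dPerm N σ⁻¹ x : ℕ) = (σ⁻¹ ⟨(x : ℕ), hx⟩ : ℕ) := dPerm_val_lt N σ⁻¹ x hx
    have h2 : (σ⁻¹ ⟨(x : ℕ), hx⟩ : ℕ) < N := (σ⁻¹ ⟨(x : ℕ), hx⟩).isLt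
    have h3 : (dPerm N σ⁻¹ x : ℕ) < N := by omega
    have hzv : (dPerm N σ (dPerm N σ⁻¹ x) : ℕ) = (σ ⟨(dPerm N σ⁻¹ x : ℕ), h3⟩ : ℕ) :=
      dPerm_val_lt N σ _ h3
    have harg : (⟨(dPerm N σ⁻¹ x : ℕ), h3⟩ : Fin N) = σ⁻¹ ⟨(x : ℕ), hx⟩ := Fin.ext h1
    rw [harg, show ∀ y, σ (σ⁻¹ y) = y from σ.apply_symm_apply] at hzv
    have hb : ((⟨(x : ℕ), hx⟩ : Fin N) : ℕ) = (x : ℕ) := rfl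
    omega
  · have h1 : 2 * N - 1 - (x : ℕ) < N := by have := x.isLt; omega
    have hyv : (dPerm N σ⁻¹ x : ℕ) = 2 * N - 1 - (σ⁻¹ ⟨2 * N - 1 - (x : ℕ), h1⟩ : ℕ) :=
      dPerm_val_ge N σ⁻¹ x (by omega) h1
    have hs := (σ⁻¹ ⟨2 * N - 1 - (x : ℕ), h1⟩).isLt
    have hge : N ≤ (dPerm N σ⁻¹ x : ℕ) := by omega
    have h3 : 2 * N - 1 - (dPerm N σ⁻¹ x : ℕ) < N := by have := (dPerm N σ⁻¹ x).isLt; omega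
    have hzv : (dPerm N σ (dPerm N σ⁻¹ x) : ℕ)
        = 2 * N - 1 - (σ ⟨2 * N - 1 - (dPerm N σ⁻¹ x : ℕ), h3⟩ : ℕ) :=
      dPerm_val_ge N σ _ hge h3
    have harg : (⟨2 * N - 1 - (dPerm N σ⁻¹ x : ℕ), h3⟩ : Fin N)
        = σ⁻¹ ⟨2 * N - 1 - (x : ℕ), h1⟩ := by
      apply Fin.ext
      show 2 * N - 1 - (dPerm N σ⁻¹ x : ℕ) = _
      omega
    rw [harg, show ∀ y, σ (σ⁻¹ y) = y from σ.apply_symm_apply] at hzv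
    have hb1 : ((⟨2 * N - 1 - (x : ℕ), h1⟩ : Fin N) : ℕ) = 2 * N - 1 - (x : ℕ) := rfl
    have := x.isLt
    omega
/-! ### Jmat invariance under dPerm -/

lemma dPerm_lt_iff (N : ℕ) (σ : Equiv.Perm (Fin N)) (x : Fin (2 * N)) :
    (dPerm N σ x : ℕ) < N ↔ (x : ℕ) < N := by
  by_cases hx : (x : ℕ) < N
  · rw [dPerm_val_lt N σ x hx]
    simp [hx, (σ ⟨(x : ℕ), hx⟩).isLt]
  · have h1 : 2 * N - 1 - (x : ℕ) < N := by have := x.isLt; omega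
    rw [dPerm_val_ge N σ x (by omega) h1]
    have hs := (σ ⟨2 * N - 1 - (x : ℕ), h1⟩).isLt
    have := x.isLt
    omega

lemma dPerm_add_iff (N : ℕ) (σ : Equiv.Perm (Fin N)) (x y : Fin (2 * N)) :
    (dPerm N σ x : ℕ) + (dPerm N σ y : ℕ) = 2 * N - 1 ↔ (x : ℕ) + (y : ℕ) = 2 * N - 1 := by
  have hx2 := x.isLt
  have hy2 := y.isLt
  by_cases hx : (x : ℕ) < N <;> by_cases hy : (y : ℕ) < N
  · rw [dPerm_val_lt N σ x hx, dPerm_val_lt N σ y hy]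
    have ha := (σ ⟨(x : ℕ), hx⟩).isLt
    have hb := (σ ⟨(y : ℕ), hy⟩).isLt
    omega
  · have h1y : 2 * N - 1 - (y : ℕ) < N := by omega
    rw [dPerm_val_lt N σ x hx, dPerm_val_ge N σ y (by omega) h1y]
    have ha := (σ ⟨(x : ℕ), hx⟩).isLt
    have hs := (σ ⟨2 * N - 1 - (y : ℕ), h1y⟩).isLt
    constructor
    · intro h
      have hval : (σ ⟨(x : ℕ), hx⟩ : ℕ) = (σ ⟨2 * N - 1 - (y : ℕ), h1y⟩ : ℕ) := by omega
      have h3 : (x : ℕ) = 2 * N - 1 - (y : ℕ) := congrArg Fin.val (σ.injective (Fin.ext hval))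
      omega
    · intro h
      have h3 : (⟨(x : ℕ), hx⟩ : Fin N) = ⟨2 * N - 1 - (y : ℕ), h1y⟩ :=
        Fin.ext (by show (x : ℕ) = 2 * N - 1 - (y : ℕ); omega)
      rw [h3]
      omega
  · have h1x : 2 * N - 1 - (x : ℕ) < N := by omega
    rw [dPerm_val_ge N σ x (by omega) h1x, dPerm_val_lt N σ y hy]
    have ha := (σ ⟨(y : ℕ), hy⟩).isLt
    have hs := (σ ⟨2 * N - 1 - (x : ℕ), h1x⟩).isLt
    constructor
    · intro h
      have hval : (σ ⟨(y : ℕ), hy⟩ : ℕ) = (σ ⟨2 * N - 1 - (x : ℕ), h1x⟩ : ℕ) := by omega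
      have h3 : (y : ℕ) = 2 * N - 1 - (x : ℕ) := congrArg Fin.val (σ.injective (Fin.ext hval))
      omega
    · intro h
      have h3 : (⟨(y : ℕ), hy⟩ : Fin N) = ⟨2 * N - 1 - (x : ℕ), h1x⟩ :=
        Fin.ext (by show (y : ℕ) = 2 * N - 1 - (x : ℕ); omega)
      rw [h3]
      omega
  · have h1x : 2 * N - 1 - (x : ℕ) < N := by omega
    have h1y : 2 * N - 1 - (y : ℕ) < N := by omega
    rw [dPerm_val_ge N σ x (by omega) h1x, dPerm_val_ge N σ y (by omega) h1y]
    have ha := (σ ⟨2 * N - 1 - (x : ℕ), h1x⟩).isLt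
    have hb := (σ ⟨2 * N - 1 - (y : ℕ), h1y⟩).isLt
    omega

lemma Jmat_dPerm (N : ℕ) (σ : Equiv.Perm (Fin N)) (u v : Fin (2 * N)) :
    Jmat F N (dPerm N σ u) (dPerm N σ v) = Jmat F N u v := by
  simp only [Jmat]
  rw [if_congr (dPerm_add_iff N σ u v) (if_congr (dPerm_lt_iff N σ u) rfl rfl) rfl]

lemma Jmat_submatrix (N : ℕ) (σ : Equiv.Perm (Fin N)) :
    (Jmat F N).submatrix (dPerm N σ) (dPerm N σ) = Jmat F N := by
  ext u v
  rw [Matrix.submatrix_apply]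
  exact Jmat_dPerm F N σ u v
/-! ### The embeddings iotaA, iotaB and entries of jEmbed -/

def iotaA (a b : ℕ) (i : Fin (2 * a)) : Fin (2 * (a + b)) :=
  ⟨if (i : ℕ) < a then (i : ℕ) else (i : ℕ) + 2 * b, by have := i.isLt; split <;> omega⟩

def iotaB (a b : ℕ) (i : Fin (2 * b)) : Fin (2 * (a + b)) :=
  ⟨a + (i : ℕ), by have := i.isLt; omega⟩

lemma iotaA_val (a b : ℕ) (i : Fin (2 * a)) :
    (iotaA a b i : ℕ) = if (i : ℕ) < a then (i : ℕ) else (i : ℕ) + 2 * b := rfl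

lemma iotaB_val (a b : ℕ) (i : Fin (2 * b)) : (iotaB a b i : ℕ) = a + (i : ℕ) := rfl

lemma iotaA_rev (a b : ℕ) (i : Fin (2 * a)) : (iotaA a b i).rev = iotaA a b i.rev := by
  have h1 := i.isLt
  apply Fin.ext
  rw [Fin.val_rev, iotaA_val, iotaA_val, Fin.val_rev]
  split_ifs <;> omega

lemma iotaB_rev (a b : ℕ) (i : Fin (2 * b)) : (iotaB a b i).rev = iotaB a b i.rev := by
  have h1 := i.isLt
  apply Fin.ext
  rw [Fin.val_rev, iotaB_val, iotaB_val, Fin.val_rev]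
  omega

lemma jEmbed_AA (a b : ℕ) (M1 : Matrix (Fin (2 * a)) (Fin (2 * a)) F)
    (M2 : Matrix (Fin (2 * b)) (Fin (2 * b)) F) (i j : Fin (2 * a)) :
    jEmbed F a b M1 M2 (iotaA a b i) (iotaA a b j) = M1 i j := by
  have hi2 := i.isLt
  have hj2 := j.isLt
  simp only [jEmbed, iotaA]
  split_ifs <;> first
    | omega
    | (congr 1 <;> apply Fin.ext <;> simp only [] <;> (try split_ifs) <;> omega)

lemma jEmbed_AB (a b : ℕ) (M1 : Matrix (Fin (2 * a)) (Fin (2 * a)) F)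
    (M2 : Matrix (Fin (2 * b)) (Fin (2 * b)) F) (i : Fin (2 * a)) (j : Fin (2 * b)) :
    jEmbed F a b M1 M2 (iotaA a b i) (iotaB a b j) = 0 := by
  have hi2 := i.isLt
  have hj2 := j.isLt
  simp only [jEmbed, iotaA, iotaB]
  split_ifs <;> first | rfl | omega

lemma jEmbed_BA (a b : ℕ) (M1 : Matrix (Fin (2 * a)) (Fin (2 * a)) F)
    (M2 : Matrix (Fin (2 * b)) (Fin (2 * b)) F) (i : Fin (2 * b)) (j : Fin (2 * a)) :
    jEmbed F a b M1 M2 (iotaB a b i) (iotaA a b j) = 0 := by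
  have hi2 := i.isLt
  have hj2 := j.isLt
  have e1 := iotaB_val a b i
  have e2 : (iotaA a b j : ℕ) < a ∨ a + 2 * b ≤ (iotaA a b j : ℕ) := by
    rw [iotaA_val]; split_ifs <;> omega
  simp only [jEmbed]
  split_ifs <;> first | rfl | omega

lemma jEmbed_BB (a b : ℕ) (M1 : Matrix (Fin (2 * a)) (Fin (2 * a)) F)
    (M2 : Matrix (Fin (2 * b)) (Fin (2 * b)) F) (i j : Fin (2 * b)) :
    jEmbed F a b M1 M2 (iotaB a b i) (iotaB a b j) = M2 i j := by
  have hi2 := i.isLt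
  have hj2 := j.isLt
  have e1 := iotaB_val a b i
  have e2 := iotaB_val a b j
  simp only [jEmbed]
  split_ifs <;> first
    | omega
    | (congr 1 <;> apply Fin.ext <;> simp only [] <;> omega)

lemma iota_cases (a b : ℕ) (x : Fin (2 * (a + b))) :
    (∃ i, x = iotaA a b i) ∨ (∃ i, x = iotaB a b i) := by
  have hx := x.isLt
  by_cases h1 : (x : ℕ) < a
  · exact Or.inl ⟨⟨(x : ℕ), by omega⟩, Fin.ext (by rw [iotaA_val]; simp only []; rw [if_pos h1])⟩
  · by_cases h2 : (x : ℕ) < a + 2 * b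
    · exact Or.inr ⟨⟨(x : ℕ) - a, by omega⟩, Fin.ext (by rw [iotaB_val]; simp only []; omega)⟩
    · refine Or.inl ⟨⟨(x : ℕ) - 2 * b, by omega⟩, Fin.ext ?_⟩
      rw [iotaA_val]
      simp only []
      rw [if_neg (by omega)]
      omega

lemma iotaA_lt_iff (a b : ℕ) (i : Fin (2 * a)) : (iotaA a b i : ℕ) < a + b ↔ (i : ℕ) < a := by
  have := i.isLt
  rw [iotaA_val]
  split_ifs <;> omega

lemma iotaB_lt_iff (a b : ℕ) (i : Fin (2 * b)) : (iotaB a b i : ℕ) < a + b ↔ (i : ℕ) < b := by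
  have := i.isLt
  rw [iotaB_val]
  omega

lemma Jmat_iotaA (a b : ℕ) (i j : Fin (2 * a)) :
    Jmat F (a + b) (iotaA a b i) (iotaA a b j) = Jmat F a i j := by
  have hi := i.isLt
  have hj := j.isLt
  have hadd : (iotaA a b i : ℕ) + (iotaA a b j : ℕ) = 2 * (a + b) - 1
      ↔ (i : ℕ) + (j : ℕ) = 2 * a - 1 := by
    rw [iotaA_val, iotaA_val]
    split_ifs <;> omega
  have hlt : (iotaA a b i : ℕ) < a + b ↔ (i : ℕ) < a := iotaA_lt_iff a b i
  simp only [Jmat]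
  rw [if_congr hadd (if_congr hlt rfl rfl) rfl]

lemma Jmat_iotaB (a b : ℕ) (i j : Fin (2 * b)) :
    Jmat F (a + b) (iotaB a b i) (iotaB a b j) = Jmat F b i j := by
  have hi := i.isLt
  have hj := j.isLt
  have hadd : (iotaB a b i : ℕ) + (iotaB a b j : ℕ) = 2 * (a + b) - 1
      ↔ (i : ℕ) + (j : ℕ) = 2 * b - 1 := by
    rw [iotaB_val, iotaB_val]
    omega
  have hlt : (iotaB a b i : ℕ) < a + b ↔ (i : ℕ) < b := iotaB_lt_iff a b i
  simp only [Jmat]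
  rw [if_congr hadd (if_congr hlt rfl rfl) rfl]

lemma Jmat_iotaAB (a b : ℕ) (i : Fin (2 * a)) (j : Fin (2 * b)) :
    Jmat F (a + b) (iotaA a b i) (iotaB a b j) = 0 := by
  have hi := i.isLt
  have hj := j.isLt
  have hadd : ¬((iotaA a b i : ℕ) + (iotaB a b j : ℕ) = 2 * (a + b) - 1) := by
    rw [iotaA_val, iotaB_val]
    split_ifs <;> omega
  simp only [Jmat, if_neg hadd]

lemma Jmat_iotaBA (a b : ℕ) (i : Fin (2 * b)) (j : Fin (2 * a)) :
    Jmat F (a + b) (iotaB a b i) (iotaA a b j) = 0 := by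
  have hi := i.isLt
  have hj := j.isLt
  have hadd : ¬((iotaB a b i : ℕ) + (iotaA a b j : ℕ) = 2 * (a + b) - 1) := by
    rw [iotaA_val, iotaB_val]
    split_ifs <;> omega
  simp only [Jmat, if_neg hadd]
/-! ### jEmbed is symplectic -/

lemma triple_prod (M : ℕ) (A B : Matrix (Fin (2 * M)) (Fin (2 * M)) F) (x y : Fin (2 * M)) :
    (Aᵀ * Jmat F M * B) x y
      = ∑ u : Fin (2 * M), A u x * ((if (u : ℕ) < M then (1 : F) else -1) * B u.rev y) := by
  rw [Matrix.mul_assoc, Matrix.mul_apply]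
  refine Finset.sum_congr rfl fun u _ => ?_
  rw [Matrix.transpose_apply]
  congr 1
  rw [Matrix.mul_apply]
  rw [Finset.sum_eq_single u.rev]
  · congr 1
    have h : (u : ℕ) + (u.rev : ℕ) = 2 * M - 1 := by
      rw [Fin.val_rev]; have := u.isLt; omega
    simp only [Jmat]
    rw [if_pos h]
  · intro v _ hv
    have h : ¬((u : ℕ) + (v : ℕ) = 2 * M - 1) := by
      intro h
      apply hv
      apply Fin.ext
      rw [Fin.val_rev]
      have := u.isLt; have := v.isLt; omega
    simp [Jmat, h]
  · intro h; exact absurd (Finset.mem_univ _) h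

lemma sum_split (a b : ℕ) (G : Fin (2 * (a + b)) → F) :
    ∑ u, G u = (∑ u : Fin (2 * a), G (iotaA a b u)) + ∑ u : Fin (2 * b), G (iotaB a b u) := by
  have hbij : Function.Bijective (Sum.elim (iotaA a b) (iotaB a b)) := by
    rw [Fintype.bijective_iff_injective_and_card]
    constructor
    · intro u v h
      have hval := congrArg Fin.val h
      rcases u with u | u <;> rcases v with v | v <;>
        simp only [Sum.elim_inl, Sum.elim_inr] at hval ⊢
      · have hu := u.isLt; have hv := v.isLt
        rw [iotaA_val, iotaA_val] at hval
        exact congrArg Sum.inl (Fin.ext (by split_ifs at hval <;> omega))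
      · exfalso
        have hu := u.isLt; have hv := v.isLt
        rw [iotaA_val, iotaB_val] at hval
        split_ifs at hval <;> omega
      · exfalso
        have hu := u.isLt; have hv := v.isLt
        rw [iotaB_val, iotaA_val] at hval
        split_ifs at hval <;> omega
      · have hu := u.isLt; have hv := v.isLt
        rw [iotaB_val, iotaB_val] at hval
        exact congrArg Sum.inr (Fin.ext (by omega))
    · simp [Fintype.card_sum]
      omega
  calc ∑ u, G u = ∑ w : Fin (2 * a) ⊕ Fin (2 * b), G (Sum.elim (iotaA a b) (iotaB a b) w) :=
        (Fintype.sum_bijective _ hbij _ _ (fun _ => rfl)).symm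
    _ = _ := by
        rw [Fintype.sum_sum_type]
        simp only [Sum.elim_inl, Sum.elim_inr]

lemma jEmbed_sp (a b : ℕ) (M1 : Matrix (Fin (2 * a)) (Fin (2 * a)) F)
    (M2 : Matrix (Fin (2 * b)) (Fin (2 * b)) F)
    (hM1 : M1ᵀ * Jmat F a * M1 = Jmat F a) (hM2 : M2ᵀ * Jmat F b * M2 = Jmat F b) :
    (jEmbed F a b M1 M2)ᵀ * Jmat F (a + b) * jEmbed F a b M1 M2 = Jmat F (a + b) := by
  have hsignA : ∀ u : Fin (2 * a),
      (if ((iotaA a b u) : ℕ) < a + b then (1 : F) else -1)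
        = (if (u : ℕ) < a then (1 : F) else -1) :=
    fun u => if_congr (iotaA_lt_iff a b u) rfl rfl
  have hsignB : ∀ u : Fin (2 * b),
      (if ((iotaB a b u) : ℕ) < a + b then (1 : F) else -1)
        = (if (u : ℕ) < b then (1 : F) else -1) :=
    fun u => if_congr (iotaB_lt_iff a b u) rfl rfl
  ext x y
  rw [triple_prod, sum_split F a b]
  rcases iota_cases a b x with ⟨x', rfl⟩ | ⟨x', rfl⟩ <;>
    rcases iota_cases a b y with ⟨y', rfl⟩ | ⟨y', rfl⟩
  · simp only [iotaA_rev, jEmbed_AA, jEmbed_BA, hsignA, zero_mul,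
      Finset.sum_const_zero, add_zero]
    rw [← triple_prod, hM1, Jmat_iotaA]
  · simp only [iotaA_rev, iotaB_rev, jEmbed_AA, jEmbed_AB, jEmbed_BA, hsignA, zero_mul,
      mul_zero, Finset.sum_const_zero, add_zero]
    rw [Jmat_iotaAB]
  · simp only [iotaA_rev, iotaB_rev, jEmbed_BB, jEmbed_BA, jEmbed_AB, hsignB, zero_mul,
      mul_zero, Finset.sum_const_zero, zero_add]
    rw [Jmat_iotaBA]
  · simp only [iotaB_rev, jEmbed_BB, jEmbed_AB, hsignB, zero_mul,
      Finset.sum_const_zero, zero_add]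
    rw [← triple_prod, hM2, Jmat_iotaB]
/-! ### Key structural lemma -/

lemma key (a b K : ℕ) (σ : Equiv.Perm (Fin (a + b))) (cN cA cB : ℕ → ℕ)
    (hA : ∀ i : Fin (2 * a),
      blkIdxF cN K (((dPerm (a + b) σ).symm (iotaA a b i) : ℕ)) = blkIdxF cA K (i : ℕ))
    (hB : ∀ i : Fin (2 * b),
      blkIdxF cN K (((dPerm (a + b) σ).symm (iotaB a b i) : ℕ)) = blkIdxF cB K (i : ℕ))
    (R : ℕ → ℕ → Prop) :
    conjPerm F (dPerm (a + b) σ)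
        {g | g ∈ SpSet F (a + b) ∧ ∀ i j : Fin (2 * (a + b)),
          R (blkIdxF cN K (j : ℕ)) (blkIdxF cN K (i : ℕ)) → g.val i j = 0}
      ∩ HSet F a b
      = {g | ∃ h1 : GL (Fin (2 * a)) F,
          (h1 ∈ SpSet F a ∧ ∀ i j : Fin (2 * a),
            R (blkIdxF cA K (j : ℕ)) (blkIdxF cA K (i : ℕ)) → h1.val i j = 0) ∧
          ∃ h2 : GL (Fin (2 * b)) F,
            (h2 ∈ SpSet F b ∧ ∀ i j : Fin (2 * b),
              R (blkIdxF cB K (j : ℕ)) (blkIdxF cB K (i : ℕ)) → h2.val i j = 0) ∧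
            g.val = jEmbed F a b h1.val h2.val} := by
  ext g
  simp only [Set.mem_inter_iff, Set.mem_setOf_eq, conjPerm, HSet]
  constructor
  · rintro ⟨⟨p, ⟨hpSp, hptri⟩, hgp⟩, h1, h1Sp, h2, h2Sp, hgj⟩
    refine ⟨h1, ⟨h1Sp, fun i j hR => ?_⟩, h2, ⟨h2Sp, fun i j hR => ?_⟩, hgj⟩
    · have e1 : h1.val i j = g.val (iotaA a b i) (iotaA a b j) := by rw [hgj, jEmbed_AA]
      rw [e1, hgp, Matrix.submatrix_apply]
      exact hptri _ _ (by rw [hA, hA]; exact hR)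
    · have e1 : h2.val i j = g.val (iotaB a b i) (iotaB a b j) := by rw [hgj, jEmbed_BB]
      rw [e1, hgp, Matrix.submatrix_apply]
      exact hptri _ _ (by rw [hB, hB]; exact hR)
  · rintro ⟨h1, ⟨h1Sp, h1tri⟩, h2, ⟨h2Sp, h2tri⟩, hgj⟩
    have hgSp : g.valᵀ * Jmat F (a + b) * g.val = Jmat F (a + b) := by
      rw [hgj]; exact jEmbed_sp F a b h1.val h2.val h1Sp h2Sp
    have hdet : IsUnit (g.val.submatrix (dPerm (a + b) σ) (dPerm (a + b) σ)) := by
      rw [Matrix.isUnit_iff_isUnit_det, Matrix.det_submatrix_equiv_self]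
      exact (Matrix.isUnit_iff_isUnit_det _).mp g.isUnit
    refine ⟨⟨hdet.unit, ⟨?_, ?_⟩, ?_⟩, h1, h1Sp, h2, h2Sp, hgj⟩
    · show (hdet.unit.valᵀ) * Jmat F (a + b) * hdet.unit.val = Jmat F (a + b)
      rw [hdet.unit_spec]
      calc (g.val.submatrix (dPerm (a + b) σ) (dPerm (a + b) σ))ᵀ * Jmat F (a + b)
            * g.val.submatrix (dPerm (a + b) σ) (dPerm (a + b) σ)
          = (g.valᵀ).submatrix (dPerm (a + b) σ) (dPerm (a + b) σ)
            * (Jmat F (a + b)).submatrix (dPerm (a + b) σ) (dPerm (a + b) σ)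
            * g.val.submatrix (dPerm (a + b) σ) (dPerm (a + b) σ) := by
            rw [Matrix.transpose_submatrix, Jmat_submatrix]
        _ = (g.valᵀ * Jmat F (a + b) * g.val).submatrix (dPerm (a + b) σ) (dPerm (a + b) σ) := by
            rw [Matrix.submatrix_mul_equiv, Matrix.submatrix_mul_equiv]
        _ = Jmat F (a + b) := by rw [hgSp, Jmat_submatrix]
    · intro u v hR
      show (g.val.submatrix (dPerm (a + b) σ) (dPerm (a + b) σ)) u v = 0
      rw [Matrix.submatrix_apply]
      rcases iota_cases a b (dPerm (a + b) σ u) with ⟨i, hi⟩ | ⟨i, hi⟩ <;>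
        rcases iota_cases a b (dPerm (a + b) σ v) with ⟨j, hj⟩ | ⟨j, hj⟩ <;>
        rw [hi, hj, hgj]
      · rw [jEmbed_AA]
        refine h1tri i j ?_
        have e1 : blkIdxF cN K ((u : Fin (2 * (a + b))) : ℕ) = blkIdxF cA K (i : ℕ) := by
          rw [← hA i, ← hi, Equiv.symm_apply_apply]
        have e2 : blkIdxF cN K ((v : Fin (2 * (a + b))) : ℕ) = blkIdxF cA K (j : ℕ) := by
          rw [← hA j, ← hj, Equiv.symm_apply_apply]
        rw [← e1, ← e2]
        exact hR
      · rw [jEmbed_AB]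
      · rw [jEmbed_BA]
      · rw [jEmbed_BB]
        refine h2tri i j ?_
        have e1 : blkIdxF cN K ((u : Fin (2 * (a + b))) : ℕ) = blkIdxF cB K (i : ℕ) := by
          rw [← hB i, ← hi, Equiv.symm_apply_apply]
        have e2 : blkIdxF cN K ((v : Fin (2 * (a + b))) : ℕ) = blkIdxF cB K (j : ℕ) := by
          rw [← hB j, ← hj, Equiv.symm_apply_apply]
        rw [← e1, ← e2]
        exact hR
    · show g.val = (g.val.submatrix (dPerm (a + b) σ) (dPerm (a + b) σ)).submatrix
        (dPerm (a + b) σ).symm (dPerm (a + b) σ).symm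
      rw [Matrix.submatrix_submatrix, Equiv.self_comp_symm, Matrix.submatrix_id_id]


/-- For a table `T ∈ 𝒯^{P_α}_{a,b}` (rows `aT = (a_1,…,a_k,r_1)` and
`bT = (b_1,…,b_k,r_2)` indexed by `Fin (k+1)`):
(1) `σ̃_T P_α σ̃_T⁻¹ ∩ H_{a,b} = j(P_{(a_1,…,a_k;r_1)} × P_{(b_1,…,b_k;r_2)})`, and
(2) `σ̃_T M_α σ̃_T⁻¹ ∩ H_{a,b} = j(M_{(a_1,…,a_k;r_1)} × M_{(b_1,…,b_k;r_2)})`. -/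
theorem stmt6 (a b k : ℕ) (n : Fin k → ℕ) (r : ℕ) (hn : ∀ i, 0 < n i)
    (hsum : (∑ i, n i) + r = a + b) (aT bT : Fin (k + 1) → ℕ)
    (hT : (∀ i, aT i + bT i = (Fin.snoc n r : Fin (k + 1) → ℕ) i) ∧
      (∑ i, aT i = a) ∧ (∑ i, bT i = b)) :
    conjPerm F (dPerm (a + b) (sigmaTab (a + b) aT bT)) (PparSp F (a + b) n r) ∩ HSet F a b =
      { g | ∃ h1 : GL (Fin (2 * a)) F,
          h1 ∈ PparSp F a (fun i : Fin k => aT i.castSucc) (aT (Fin.last k)) ∧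
          ∃ h2 : GL (Fin (2 * b)) F,
            h2 ∈ PparSp F b (fun i : Fin k => bT i.castSucc) (bT (Fin.last k)) ∧
            g.val = jEmbed F a b h1.val h2.val } ∧
    conjPerm F (dPerm (a + b) (sigmaTab (a + b) aT bT)) (MparSp F (a + b) n r) ∩ HSet F a b =
      { g | ∃ h1 : GL (Fin (2 * a)) F,
          h1 ∈ MparSp F a (fun i : Fin k => aT i.castSucc) (aT (Fin.last k)) ∧
          ∃ h2 : GL (Fin (2 * b)) F,
            h2 ∈ MparSp F b (fun i : Fin k => bT i.castSucc) (bT (Fin.last k)) ∧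
            g.val = jEmbed F a b h1.val h2.val } := by
  obtain ⟨hTab, hTa, hTb⟩ := hT
  have hsnocC : ∀ i : Fin k, aT i.castSucc + bT i.castSucc = n i := fun i => by
    have h := hTab i.castSucc
    rwa [Fin.snoc_castSucc] at h
  have hsnocL : aT (Fin.last k) + bT (Fin.last k) = r := by
    have h := hTab (Fin.last k)
    rwa [Fin.snoc_last] at h
  have hnExtk : ∀ j, j < k → nExt aT j + nExt bT j = nExt n j := by
    intro j hj
    simp only [nExt, dif_pos hj, dif_pos (show j < k + 1 by omega)]
    exact hsnocC ⟨j, hj⟩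
  have haLast : nExt aT k = aT (Fin.last k) := by
    simp only [nExt, dif_pos (show k < k + 1 by omega)]
    rfl
  have hbLast : nExt bT k = bT (Fin.last k) := by
    simp only [nExt, dif_pos (show k < k + 1 by omega)]
    rfl
  have hAB : ∀ j, j ≤ k → psum n j = psum aT j + psum bT j := by
    intro j
    induction j with
    | zero => intro _; simp [psum]
    | succ j ih =>
      intro hj
      have h1 := ih (by omega)
      have h2 := hnExtk j (by omega)
      rw [psum_succ, psum_succ, psum_succ]
      omega
  have htotA : psum aT (k + 1) = a := by rw [psum_total]; exact hTa
  have htotB : psum bT (k + 1) = b := by rw [psum_total]; exact hTb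
  have htotN : psum n k + r = a + b := by rw [psum_total]; exact hsum
  have haT' : ∀ j, j ≤ k → psum (fun i : Fin k => aT i.castSucc) j = psum aT j := by
    intro j hj
    refine Finset.sum_congr rfl fun i hi => ?_
    rw [Finset.mem_range] at hi
    simp only [nExt, dif_pos (show i < k by omega), dif_pos (show i < k + 1 by omega)]
    rfl
  have hbT' : ∀ j, j ≤ k → psum (fun i : Fin k => bT i.castSucc) j = psum bT j := by
    intro j hj
    refine Finset.sum_congr rfl fun i hi => ?_
    rw [Finset.mem_range] at hi
    simp only [nExt, dif_pos (show i < k by omega), dif_pos (show i < k + 1 by omega)]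
    rfl
  have haSucc : psum aT (k + 1) = psum aT k + aT (Fin.last k) := by rw [psum_succ, haLast]
  have hbSucc : psum bT (k + 1) = psum bT k + bT (Fin.last k) := by rw [psum_succ, hbLast]
  set tA : ℕ → ℕ := fun m => blkIdxF (nExt aT) (k + 1) m with htAdef
  set tB : ℕ → ℕ := fun m => blkIdxF (nExt bT) (k + 1) m with htBdef
  have htA : ∀ m, m < a → tA m ≤ k ∧ psum aT (tA m) ≤ m ∧ m < psum aT (tA m + 1) := by
    intro m hm
    obtain ⟨t, ht1, ht2, ht3⟩ := exists_blk (psum aT) (by simp [psum])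
      (show m < psum aT (k + 1) by omega)
    have heq : tA m = t := blkIdxF_eq (nExt aT) (by omega) ht2 ht3
    exact ⟨by omega, by rw [heq]; exact ht2, by rw [heq]; exact ht3⟩
  have htB : ∀ m, m < b → tB m ≤ k ∧ psum bT (tB m) ≤ m ∧ m < psum bT (tB m + 1) := by
    intro m hm
    obtain ⟨t, ht1, ht2, ht3⟩ := exists_blk (psum bT) (by simp [psum])
      (show m < psum bT (k + 1) by omega)
    have heq : tB m = t := blkIdxF_eq (nExt bT) (by omega) ht2 ht3
    exact ⟨by omega, by rw [heq]; exact ht2, by rw [heq]; exact ht3⟩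
  set ρ : ℕ → ℕ :=
    fun m => if m < a then m + psum bT (tA m) else (m - a) + psum aT (tB (m - a) + 1) with hρdef
  have hρA : ∀ m, m < a → ρ m = m + psum bT (tA m) := fun m hm => by
    simp only [hρdef, if_pos hm]
  have hρB : ∀ m, a ≤ m → ρ m = (m - a) + psum aT (tB (m - a) + 1) := fun m hm => by
    simp only [hρdef, if_neg (show ¬(m < a) by omega)]
  have hbound : ∀ m, m < a + b → ρ m < a + b := by
    intro m hm
    by_cases hma : m < a
    · obtain ⟨ht1, ht2, ht3⟩ := htA m hma
      have h4 : psum aT (tA m + 1) ≤ a := by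
        have := psum_mono aT (show tA m + 1 ≤ k + 1 by omega); omega
      have h5 : psum bT (tA m) ≤ b := by
        have := psum_mono bT (show tA m ≤ k + 1 by omega); omega
      rw [hρA m hma]; omega
    · obtain ⟨ht1, ht2, ht3⟩ := htB (m - a) (by omega)
      have h4 : psum aT (tB (m - a) + 1) ≤ a := by
        have := psum_mono aT (show tB (m - a) + 1 ≤ k + 1 by omega); omega
      have h5 : psum bT (tB (m - a) + 1) ≤ b := by
        have := psum_mono bT (show tB (m - a) + 1 ≤ k + 1 by omega); omega
      rw [hρB m (by omega)]; omega
  have hblkPairA : ∀ m, m < a → blkPair aT bT (m + psum bT (tA m)) = tA m := by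
    intro m hm
    obtain ⟨ht1, ht2, ht3⟩ := htA m hm
    have h5 := psum_mono bT (show tA m ≤ tA m + 1 by omega)
    exact blkPair_eq aT bT (by omega) (by omega) (by omega)
  have hblkPairB : ∀ m', m' < b → blkPair aT bT (m' + psum aT (tB m' + 1)) = tB m' := by
    intro m' hm'
    obtain ⟨ht1, ht2, ht3⟩ := htB m' hm'
    have h5 := psum_mono aT (show tB m' ≤ tB m' + 1 by omega)
    exact blkPair_eq aT bT (by omega) (by omega) (by omega)
  have hlabelA : ∀ m, m < a → isBTab aT bT (ρ m) = false := by
    intro m hm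
    obtain ⟨ht1, ht2, ht3⟩ := htA m hm
    rw [hρA m hm, isBTab, hblkPairA m hm]
    exact decide_eq_false (by omega)
  have hlabelB : ∀ m, a ≤ m → m < a + b → isBTab aT bT (ρ m) = true := by
    intro m hm1 hm2
    obtain ⟨ht1, ht2, ht3⟩ := htB (m - a) (by omega)
    rw [hρB m hm1, isBTab, hblkPairB (m - a) (by omega)]
    exact decide_eq_true (by omega)
  have hmonoA : ∀ m m', m < m' → m' < a → ρ m < ρ m' := by
    intro m m' h1 h2
    have hm : m < a := by omega
    have ht : tA m ≤ tA m' := blkIdxF_mono (nExt aT) (k + 1) (le_of_lt h1)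
    have hb2 := psum_mono bT ht
    rw [hρA m hm, hρA m' h2]; omega
  have hmonoB : ∀ m m', a ≤ m → m < m' → m' < a + b → ρ m < ρ m' := by
    intro m m' h0 h1 h2
    have ht : tB (m - a) ≤ tB (m' - a) := blkIdxF_mono (nExt bT) (k + 1) (by omega)
    have hb2 := psum_mono aT (show tB (m - a) + 1 ≤ tB (m' - a) + 1 by omega)
    rw [hρB m h0, hρB m' (by omega)]; omega
  have hinj : Function.Injective
      (fun m : Fin (a + b) => (⟨ρ (m : ℕ), hbound (m : ℕ) m.isLt⟩ : Fin (a + b))) := by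
    intro u v huv
    have hval : ρ (u : ℕ) = ρ (v : ℕ) := congrArg Fin.val huv
    have hu2 := u.isLt
    have hv2 := v.isLt
    apply Fin.ext
    by_cases hu : (u : ℕ) < a <;> by_cases hv : (v : ℕ) < a
    · rcases Nat.lt_trichotomy (u : ℕ) (v : ℕ) with h | h | h
      · have := hmonoA _ _ h hv; omega
      · exact h
      · have := hmonoA _ _ h hu; omega
    · exfalso
      have l1 := hlabelA _ hu
      have l2 := hlabelB (v : ℕ) (by omega) hv2
      rw [hval, l2] at l1
      exact absurd l1 (by simp)
    · exfalso
      have l1 := hlabelA _ hv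
      have l2 := hlabelB (u : ℕ) (by omega) hu2
      rw [← hval, l2] at l1
      exact absurd l1 (by simp)
    · rcases Nat.lt_trichotomy (u : ℕ) (v : ℕ) with h | h | h
      · have := hmonoB _ _ (by omega) h hv2; omega
      · exact h
      · have := hmonoB _ _ (by omega) h hu2; omega
  set ρe : Equiv.Perm (Fin (a + b)) :=
    Equiv.ofBijective _ (Finite.injective_iff_bijective.mp hinj) with hρedef
  have hρe : ∀ m : Fin (a + b), (ρe m : ℕ) = ρ (m : ℕ) := fun m => rfl
  have hsort : Tuple.sort (fun x : Fin (a + b) => isBTab aT bT (x : ℕ)) = ρe := by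
    symm
    rw [Tuple.eq_sort_iff]
    constructor
    · intro u v huv
      show isBTab aT bT ((ρe u : ℕ)) ≤ isBTab aT bT ((ρe v : ℕ))
      by_cases hu : (u : ℕ) < a
      · rw [show isBTab aT bT ((ρe u : ℕ)) = false from (by rw [hρe]; exact hlabelA _ hu)]
        exact Bool.false_le _
      · have hv : a ≤ (v : ℕ) := le_trans (by omega) (Fin.le_def.mp huv)
        rw [show isBTab aT bT ((ρe u : ℕ)) = true from
              (by rw [hρe]; exact hlabelB _ (by omega) u.isLt),
            show isBTab aT bT ((ρe v : ℕ)) = true from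
              (by rw [hρe]; exact hlabelB _ hv v.isLt)]
    · intro u v huv hfuv
      have hfuv' : isBTab aT bT ((ρe u : ℕ)) = isBTab aT bT ((ρe v : ℕ)) := hfuv
      have hlt := Fin.lt_def.mp huv
      rw [Fin.lt_def]
      by_cases hu : (u : ℕ) < a <;> by_cases hv : (v : ℕ) < a
      · rw [hρe, hρe]; exact hmonoA _ _ hlt hv
      · exfalso
        have l1 : isBTab aT bT ((ρe u : ℕ)) = false := by rw [hρe]; exact hlabelA _ hu
        have l2 : isBTab aT bT ((ρe v : ℕ)) = true := by
          rw [hρe]; exact hlabelB _ (by omega) v.isLt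
        rw [hfuv', l2] at l1
        exact absurd l1 (by simp)
      · omega
      · rw [hρe, hρe]; exact hmonoB _ _ (by omega) hlt v.isLt
  have hdsymm : (dPerm (a + b) (sigmaTab (a + b) aT bT)).symm = dPerm (a + b) ρe := by
    have hinv : (sigmaTab (a + b) aT bT)⁻¹ = ρe := by
      unfold sigmaTab
      rw [hsort]
      exact inv_inv ρe
    rw [dPerm_symm, hinv]
  have hTransA : ∀ i : Fin (2 * a),
      blkIdxF (cSp n r) (2 * k + 1)
        (((dPerm (a + b) (sigmaTab (a + b) aT bT)).symm (iotaA a b i) : ℕ))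
      = blkIdxF (cSp (fun i : Fin k => aT i.castSucc) (aT (Fin.last k))) (2 * k + 1) (i : ℕ) := by
    intro i
    rw [hdsymm]
    have hi2 := i.isLt
    by_cases hi : (i : ℕ) < a
    · have hlt : (iotaA a b i : ℕ) < a + b := (iotaA_lt_iff a b i).2 hi
      rw [dPerm_val_lt (a + b) ρe _ hlt]
      have hiv : (iotaA a b i : ℕ) = (i : ℕ) := by rw [iotaA_val, if_pos hi]
      have hval : (ρe ⟨(iotaA a b i : ℕ), hlt⟩ : ℕ) = ρ (i : ℕ) :=
        (hρe _).trans (congrArg ρ hiv)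
      rw [hval, hρA _ hi]
      obtain ⟨ht1, ht2, ht3⟩ := htA (i : ℕ) hi
      have hLHS : blkIdxF (cSp n r) (2 * k + 1) ((i : ℕ) + psum bT (tA (i : ℕ)))
          = tA (i : ℕ) := by
        apply blkIdxF_eq (cSp n r) (show tA (i : ℕ) ≤ 2 * k + 1 by omega)
        · rw [cSp_sum_le n r (show tA (i : ℕ) ≤ k by omega)]
          have := hAB (tA (i : ℕ)) (by omega)
          omega
        · by_cases htk : tA (i : ℕ) < k
          · rw [cSp_sum_le n r (show tA (i : ℕ) + 1 ≤ k by omega)]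
            have h6 := hAB (tA (i : ℕ) + 1) (by omega)
            have h7 := psum_mono bT (show tA (i : ℕ) ≤ tA (i : ℕ) + 1 by omega)
            omega
          · have hk : tA (i : ℕ) = k := by omega
            rw [hk]
            have h8 := cSp_sum_ge n r (Nat.zero_le k)
            rw [Nat.add_zero, Nat.sub_zero] at h8
            have h9 := hAB k le_rfl
            rw [hk] at ht3
            omega
      have hRHS : blkIdxF (cSp (fun i : Fin k => aT i.castSucc) (aT (Fin.last k))) (2 * k + 1)
          (i : ℕ) = tA (i : ℕ) := by
        apply blkIdxF_eq _ (show tA (i : ℕ) ≤ 2 * k + 1 by omega)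
        · rw [cSp_sum_le _ _ (show tA (i : ℕ) ≤ k by omega), haT' _ (show tA (i : ℕ) ≤ k by omega)]
          exact ht2
        · by_cases htk : tA (i : ℕ) < k
          · rw [cSp_sum_le _ _ (show tA (i : ℕ) + 1 ≤ k by omega),
              haT' _ (show tA (i : ℕ) + 1 ≤ k by omega)]
            exact ht3
          · have hk : tA (i : ℕ) = k := by omega
            rw [hk]
            have h8 := cSp_sum_ge (fun i : Fin k => aT i.castSucc) (aT (Fin.last k)) (Nat.zero_le k)
            rw [Nat.add_zero, Nat.sub_zero, haT' k le_rfl] at h8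
            rw [hk] at ht3
            omega
      rw [hLHS, hRHS]
    · have hge : a + b ≤ (iotaA a b i : ℕ) := by rw [iotaA_val, if_neg hi]; omega
      have h1 : 2 * (a + b) - 1 - (iotaA a b i : ℕ) < a + b := by
        have := (iotaA a b i).isLt; omega
      rw [dPerm_val_ge (a + b) ρe _ hge h1]
      have hiv : (iotaA a b i : ℕ) = (i : ℕ) + 2 * b := by rw [iotaA_val, if_neg hi]
      set i' : ℕ := 2 * a - 1 - (i : ℕ) with hi'def
      have hieq : 2 * (a + b) - 1 - (iotaA a b i : ℕ) = i' := by omega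
      have hi'a : i' < a := by omega
      have hval : (ρe ⟨2 * (a + b) - 1 - (iotaA a b i : ℕ), h1⟩ : ℕ) = ρ i' :=
        (hρe _).trans (congrArg ρ hieq)
      rw [hval, hρA i' hi'a]
      obtain ⟨ht1, ht2, ht3⟩ := htA i' hi'a
      by_cases htk : tA i' < k
      · set s : ℕ := k - 1 - tA i' with hsdef
        have hs1 : s ≤ k := by omega
        have hs2 : s + 1 ≤ k := by omega
        have e1 := cSp_sum_ge n r hs1
        have e2 := cSp_sum_ge n r hs2
        have e3 : k - s = tA i' + 1 := by omega
        have e4 : k - (s + 1) = tA i' := by omega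
        rw [e3] at e1
        rw [e4] at e2
        have e5 : k + 1 + (s + 1) = (k + 1 + s) + 1 := by omega
        rw [e5] at e2
        have hABt := hAB (tA i') (by omega)
        have hABt1 := hAB (tA i' + 1) (by omega)
        have hABk := hAB k le_rfl
        have hbm := psum_mono bT (show tA i' ≤ tA i' + 1 by omega)
        have ham := psum_mono aT (show tA i' ≤ tA i' + 1 by omega)
        have ham2 := psum_mono aT (show tA i' + 1 ≤ k + 1 by omega)
        have hbm2 := psum_mono bT (show tA i' + 1 ≤ k + 1 by omega)
        have hLHS : blkIdxF (cSp n r) (2 * k + 1)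
            (2 * (a + b) - 1 - (i' + psum bT (tA i'))) = k + 1 + s := by
          apply blkIdxF_eq _ (show k + 1 + s ≤ 2 * k + 1 by omega)
          · omega
          · omega
        have f1 := cSp_sum_ge (fun i : Fin k => aT i.castSucc) (aT (Fin.last k)) hs1
        have f2 := cSp_sum_ge (fun i : Fin k => aT i.castSucc) (aT (Fin.last k)) hs2
        rw [e3, haT' (tA i' + 1) (by omega), haT' k le_rfl] at f1
        rw [e4, e5, haT' (tA i') (by omega), haT' k le_rfl] at f2
        have hRHS : blkIdxF (cSp (fun i : Fin k => aT i.castSucc) (aT (Fin.last k))) (2 * k + 1)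
            (i : ℕ) = k + 1 + s := by
          apply blkIdxF_eq _ (show k + 1 + s ≤ 2 * k + 1 by omega)
          · omega
          · omega
        rw [hLHS, hRHS]
      · have hk : tA i' = k := by omega
        rw [hk] at ht2 ht3 ⊢
        have e1 := cSp_sum_ge n r (Nat.zero_le k)
        rw [Nat.add_zero, Nat.sub_zero] at e1
        have hABk := hAB k le_rfl
        have hLHS : blkIdxF (cSp n r) (2 * k + 1)
            (2 * (a + b) - 1 - (i' + psum bT k)) = k := by
          apply blkIdxF_eq _ (show k ≤ 2 * k + 1 by omega)
          · rw [cSp_sum_le n r le_rfl]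
            omega
          · omega
        have f1 := cSp_sum_ge (fun i : Fin k => aT i.castSucc) (aT (Fin.last k)) (Nat.zero_le k)
        rw [Nat.add_zero, Nat.sub_zero, haT' k le_rfl] at f1
        have hRHS : blkIdxF (cSp (fun i : Fin k => aT i.castSucc) (aT (Fin.last k))) (2 * k + 1)
            (i : ℕ) = k := by
          apply blkIdxF_eq _ (show k ≤ 2 * k + 1 by omega)
          · rw [cSp_sum_le _ _ le_rfl, haT' k le_rfl]
            omega
          · omega
        rw [hLHS, hRHS]
  have hTransB : ∀ i : Fin (2 * b),
      blkIdxF (cSp n r) (2 * k + 1)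
        (((dPerm (a + b) (sigmaTab (a + b) aT bT)).symm (iotaB a b i) : ℕ))
      = blkIdxF (cSp (fun i : Fin k => bT i.castSucc) (bT (Fin.last k))) (2 * k + 1) (i : ℕ) := by
    intro i
    rw [hdsymm]
    have hi2 := i.isLt
    by_cases hi : (i : ℕ) < b
    · have hlt : (iotaB a b i : ℕ) < a + b := (iotaB_lt_iff a b i).2 hi
      rw [dPerm_val_lt (a + b) ρe _ hlt]
      have hval : (ρe ⟨(iotaB a b i : ℕ), hlt⟩ : ℕ) = ρ (a + (i : ℕ)) :=
        (hρe _).trans (congrArg ρ (iotaB_val a b i))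
      have hsub : a + (i : ℕ) - a = (i : ℕ) := by omega
      rw [hval, hρB (a + (i : ℕ)) (by omega), hsub]
      obtain ⟨ht1, ht2, ht3⟩ := htB (i : ℕ) hi
      have ham := psum_mono aT (show tB (i : ℕ) ≤ tB (i : ℕ) + 1 by omega)
      have hLHS : blkIdxF (cSp n r) (2 * k + 1) ((i : ℕ) + psum aT (tB (i : ℕ) + 1))
          = tB (i : ℕ) := by
        apply blkIdxF_eq (cSp n r) (show tB (i : ℕ) ≤ 2 * k + 1 by omega)
        · rw [cSp_sum_le n r (show tB (i : ℕ) ≤ k by omega)]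
          have := hAB (tB (i : ℕ)) (by omega)
          omega
        · by_cases htk : tB (i : ℕ) < k
          · rw [cSp_sum_le n r (show tB (i : ℕ) + 1 ≤ k by omega)]
            have h6 := hAB (tB (i : ℕ) + 1) (by omega)
            omega
          · have hk : tB (i : ℕ) = k := by omega
            rw [hk]
            have h8 := cSp_sum_ge n r (Nat.zero_le k)
            rw [Nat.add_zero, Nat.sub_zero] at h8
            have h9 := hAB k le_rfl
            rw [hk] at ht3
            omega
      have hRHS : blkIdxF (cSp (fun i : Fin k => bT i.castSucc) (bT (Fin.last k))) (2 * k + 1)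
          (i : ℕ) = tB (i : ℕ) := by
        apply blkIdxF_eq _ (show tB (i : ℕ) ≤ 2 * k + 1 by omega)
        · rw [cSp_sum_le _ _ (show tB (i : ℕ) ≤ k by omega), hbT' _ (show tB (i : ℕ) ≤ k by omega)]
          exact ht2
        · by_cases htk : tB (i : ℕ) < k
          · rw [cSp_sum_le _ _ (show tB (i : ℕ) + 1 ≤ k by omega),
              hbT' _ (show tB (i : ℕ) + 1 ≤ k by omega)]
            exact ht3
          · have hk : tB (i : ℕ) = k := by omega
            rw [hk]
            have h8 := cSp_sum_ge (fun i : Fin k => bT i.castSucc) (bT (Fin.last k)) (Nat.zero_le k)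
            rw [Nat.add_zero, Nat.sub_zero, hbT' k le_rfl] at h8
            rw [hk] at ht3
            omega
      rw [hLHS, hRHS]
    · have hge : a + b ≤ (iotaB a b i : ℕ) := by rw [iotaB_val]; omega
      have h1 : 2 * (a + b) - 1 - (iotaB a b i : ℕ) < a + b := by
        have := (iotaB a b i).isLt; omega
      rw [dPerm_val_ge (a + b) ρe _ hge h1]
      have hiv : (iotaB a b i : ℕ) = a + (i : ℕ) := iotaB_val a b i
      set i'' : ℕ := 2 * b - 1 - (i : ℕ) with hi''def
      have hieq : 2 * (a + b) - 1 - (iotaB a b i : ℕ) = a + i'' := by omega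
      have hval : (ρe ⟨2 * (a + b) - 1 - (iotaB a b i : ℕ), h1⟩ : ℕ) = ρ (a + i'') :=
        (hρe _).trans (congrArg ρ hieq)
      have hsub : a + i'' - a = i'' := by omega
      rw [hval, hρB (a + i'') (by omega), hsub]
      obtain ⟨ht1, ht2, ht3⟩ := htB i'' (by omega)
      by_cases htk : tB i'' < k
      · set s : ℕ := k - 1 - tB i'' with hsdef
        have hs1 : s ≤ k := by omega
        have hs2 : s + 1 ≤ k := by omega
        have e1 := cSp_sum_ge n r hs1
        have e2 := cSp_sum_ge n r hs2
        have e3 : k - s = tB i'' + 1 := by omega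
        have e4 : k - (s + 1) = tB i'' := by omega
        rw [e3] at e1
        rw [e4] at e2
        have e5 : k + 1 + (s + 1) = (k + 1 + s) + 1 := by omega
        rw [e5] at e2
        have hABt := hAB (tB i'') (by omega)
        have hABt1 := hAB (tB i'' + 1) (by omega)
        have hABk := hAB k le_rfl
        have ham := psum_mono aT (show tB i'' ≤ tB i'' + 1 by omega)
        have hbm := psum_mono bT (show tB i'' ≤ tB i'' + 1 by omega)
        have ham2 := psum_mono aT (show tB i'' + 1 ≤ k + 1 by omega)
        have hbm2 := psum_mono bT (show tB i'' + 1 ≤ k + 1 by omega)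
        have hLHS : blkIdxF (cSp n r) (2 * k + 1)
            (2 * (a + b) - 1 - (i'' + psum aT (tB i'' + 1))) = k + 1 + s := by
          apply blkIdxF_eq _ (show k + 1 + s ≤ 2 * k + 1 by omega)
          · omega
          · omega
        have f1 := cSp_sum_ge (fun i : Fin k => bT i.castSucc) (bT (Fin.last k)) hs1
        have f2 := cSp_sum_ge (fun i : Fin k => bT i.castSucc) (bT (Fin.last k)) hs2
        rw [e3, hbT' (tB i'' + 1) (by omega), hbT' k le_rfl] at f1
        rw [e4, e5, hbT' (tB i'') (by omega), hbT' k le_rfl] at f2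
        have hRHS : blkIdxF (cSp (fun i : Fin k => bT i.castSucc) (bT (Fin.last k))) (2 * k + 1)
            (i : ℕ) = k + 1 + s := by
          apply blkIdxF_eq _ (show k + 1 + s ≤ 2 * k + 1 by omega)
          · omega
          · omega
        rw [hLHS, hRHS]
      · have hk : tB i'' = k := by omega
        rw [hk] at ht2 ht3 ⊢
        have e1 := cSp_sum_ge n r (Nat.zero_le k)
        rw [Nat.add_zero, Nat.sub_zero] at e1
        have hABk := hAB k le_rfl
        have hLHS : blkIdxF (cSp n r) (2 * k + 1)
            (2 * (a + b) - 1 - (i'' + psum aT (k + 1))) = k := by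
          apply blkIdxF_eq _ (show k ≤ 2 * k + 1 by omega)
          · rw [cSp_sum_le n r le_rfl]
            omega
          · omega
        have f1 := cSp_sum_ge (fun i : Fin k => bT i.castSucc) (bT (Fin.last k)) (Nat.zero_le k)
        rw [Nat.add_zero, Nat.sub_zero, hbT' k le_rfl] at f1
        have hRHS : blkIdxF (cSp (fun i : Fin k => bT i.castSucc) (bT (Fin.last k))) (2 * k + 1)
            (i : ℕ) = k := by
          apply blkIdxF_eq _ (show k ≤ 2 * k + 1 by omega)
          · rw [cSp_sum_le _ _ le_rfl, hbT' k le_rfl]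
            omega
          · omega
        rw [hLHS, hRHS]
  exact ⟨key F a b (2 * k + 1) (sigmaTab (a + b) aT bT) _ _ _ hTransA hTransB (· < ·),
         key F a b (2 * k + 1) (sigmaTab (a + b) aT bT) _ _ _ hTransA hTransB (· ≠ ·)⟩

end Stmt6
end

section
/- Let F be a field of characteristic different from 2, N ≥ 1, and let y ∈ Sp_N(F) be a monomial matrix (exactly one nonzero entry in each row and each column) with y² = I_{2N}. Let w = τ𝔠 be the signed permutation of [1,N] induced by y, i.e., for i ∈ [1,N], y maps the line F·e_i into F·e_{τ(i)} if i ∉ 𝔠 and into F·e_{2N+1−τ(i)} if i ∈ 𝔠. Then w is an involution and τ(i) ≠ i for every i ∈ 𝔠. -/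
open scoped MatrixGroups Matrix

namespace Stmt8

variable (F : Type*) [Field F]

/-- Extension of a tuple `n : Fin k → ℕ` by zero to all of `ℕ`. -/
def nExt {k : ℕ} (n : Fin k → ℕ) : ℕ → ℕ := fun i => if h : i < k then n ⟨i, h⟩ else 0

/-- Partial sums `ν_j = n 0 + ⋯ + n (j-1)`. -/
def psum {k : ℕ} (n : Fin k → ℕ) (j : ℕ) : ℕ := ∑ i ∈ Finset.range j, nExt n i

/-- Block index of a position `x` with respect to the composition `c` with `K` parts. -/
def blkIdxF (c : ℕ → ℕ) (K : ℕ) (x : ℕ) : ℕ :=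
  ((Finset.range K).filter (fun j => (∑ i ∈ Finset.range (j + 1), c i) ≤ x)).card

/-- The symplectic form `J_N = [[0, w_N], [-w_N, 0]]`, `w_N` the antidiagonal matrix. -/
def Jmat (N : ℕ) : Matrix (Fin (2 * N)) (Fin (2 * N)) F :=
  fun i j => if (i : ℕ) + (j : ℕ) = 2 * N - 1 then (if (i : ℕ) < N then 1 else -1) else 0

/-- The symplectic group `Sp_N(F) = { g ∈ GL_{2N}(F) : ᵗg J_N g = J_N }` (as a set). -/
def SpSet (N : ℕ) : Set (GL (Fin (2 * N)) F) :=
  { g | (g.val)ᵀ * Jmat F N * g.val = Jmat F N }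

/-- The composition `(n_1, …, n_k, 2r, n_k, …, n_1)` of `2N` underlying the standard
parabolic subgroup of `Sp_N` attached to `(n_1, …, n_k; r)`. -/
def cSp {k : ℕ} (n : Fin k → ℕ) (r : ℕ) : ℕ → ℕ :=
  fun i => if i < k then nExt n i else if i = k then 2 * r else nExt n (2 * k - i)

/-- The standard parabolic subgroup `P_{(n_1,…,n_k;r)}` of `Sp_N` (as a set): block upper
triangular symplectic matrices with diagonal blocks `n_1, …, n_k, 2r, n_k, …, n_1`. -/
def PparSp (N : ℕ) {k : ℕ} (n : Fin k → ℕ) (r : ℕ) : Set (GL (Fin (2 * N)) F) :=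
  { g | g ∈ SpSet F N ∧ ∀ i j : Fin (2 * N),
      blkIdxF (cSp n r) (2 * k + 1) (j : ℕ) < blkIdxF (cSp n r) (2 * k + 1) (i : ℕ) →
        g.val i j = 0 }

/-- The standard Levi subgroup `M_{(n_1,…,n_k;r)}` of `Sp_N` (as a set). -/
def MparSp (N : ℕ) {k : ℕ} (n : Fin k → ℕ) (r : ℕ) : Set (GL (Fin (2 * N)) F) :=
  { g | g ∈ SpSet F N ∧ ∀ i j : Fin (2 * N),
      blkIdxF (cSp n r) (2 * k + 1) (j : ℕ) ≠ blkIdxF (cSp n r) (2 * k + 1) (i : ℕ) →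
        g.val i j = 0 }

/-- The doubled permutation `σ̃` of `[0, 2N)` attached to `σ ∈ S_N`:
`i ↦ σ i` and `2N - 1 - i ↦ 2N - 1 - σ i` for `i < N`. -/
def dPerm (N : ℕ) (σ : Equiv.Perm (Fin N)) : Equiv.Perm (Fin (2 * N)) :=
  (Equiv.permCongr (finSumFinEquiv.trans (finCongr (two_mul N).symm)))
    (Equiv.sumCongr σ (Fin.revPerm.trans (σ.trans Fin.revPerm)))

/-- The matrix `j(h₁, h₂)`: for `h₁ = [[A, B], [C, D]]` of size `2a × 2a` (blocks of size
`a × a`) and `h₂` of size `2b × 2b`, the `2(a+b) × 2(a+b)` matrix with `A, B, C, D` in the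
four corner `a × a` blocks and `h₂` in the central `2b × 2b` block. -/
def jEmbed (a b : ℕ) (h1 : Matrix (Fin (2 * a)) (Fin (2 * a)) F)
    (h2 : Matrix (Fin (2 * b)) (Fin (2 * b)) F) :
    Matrix (Fin (2 * (a + b))) (Fin (2 * (a + b))) F := fun x y =>
  if hx : (x : ℕ) < a then
    if hy : (y : ℕ) < a then h1 ⟨(x : ℕ), by omega⟩ ⟨(y : ℕ), by omega⟩
    else if hy2 : a + 2 * b ≤ (y : ℕ) then
      h1 ⟨(x : ℕ), by omega⟩ ⟨(y : ℕ) - 2 * b, by have := y.isLt; omega⟩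
    else 0
  else if hx2 : a + 2 * b ≤ (x : ℕ) then
    if hy : (y : ℕ) < a then
      h1 ⟨(x : ℕ) - 2 * b, by have := x.isLt; omega⟩ ⟨(y : ℕ), by omega⟩
    else if hy2 : a + 2 * b ≤ (y : ℕ) then
      h1 ⟨(x : ℕ) - 2 * b, by have := x.isLt; omega⟩ ⟨(y : ℕ) - 2 * b, by have := y.isLt; omega⟩
    else 0
  else
    if hy : a ≤ (y : ℕ) ∧ (y : ℕ) < a + 2 * b then
      h2 ⟨(x : ℕ) - a, by omega⟩ ⟨(y : ℕ) - a, by omega⟩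
    else 0

/-- Upper triangular invertible matrices. -/
def UTSet (M : ℕ) : Set (GL (Fin M) F) :=
  { g | ∀ i j : Fin M, (j : ℕ) < (i : ℕ) → g.val i j = 0 }

/-- The subgroup `H_{a,b} = j(Sp_a × Sp_b)` of `Sp_{a+b}` (as a set). -/
def HSet (a b : ℕ) : Set (GL (Fin (2 * (a + b))) F) :=
  { g | ∃ h1 : GL (Fin (2 * a)) F, h1 ∈ SpSet F a ∧
        ∃ h2 : GL (Fin (2 * b)) F, h2 ∈ SpSet F b ∧ g.val = jEmbed F a b h1.val h2.val }

/-- The subgroup `P₀^H = j(B_a × B_b)`, `B_c` the upper triangular subgroup of `Sp_c`. -/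
def P0HSp (a b : ℕ) : Set (GL (Fin (2 * (a + b))) F) :=
  { g | ∃ h1 : GL (Fin (2 * a)) F, h1 ∈ SpSet F a ∩ UTSet F (2 * a) ∧
        ∃ h2 : GL (Fin (2 * b)) F, h2 ∈ SpSet F b ∩ UTSet F (2 * b) ∧
          g.val = jEmbed F a b h1.val h2.val }

/-- A monomial matrix: exactly one nonzero entry in each row and in each column. -/
def IsMonomial {M : ℕ} (A : Matrix (Fin M) (Fin M) F) : Prop :=
  (∀ i, ∃! j, A i j ≠ 0) ∧ (∀ j, ∃! i, A i j ≠ 0)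

/-- Conjugation `g S g⁻¹` of a set by a group element. -/
def conjSet {M : ℕ} (g : GL (Fin M) F) (S : Set (GL (Fin M) F)) : Set (GL (Fin M) F) :=
  (fun h => g * h * g⁻¹) '' S

/-- Conjugation `σ S σ⁻¹` by the permutation matrix of `σ`. -/
def conjPerm {M : ℕ} (σ : Equiv.Perm (Fin M)) (S : Set (GL (Fin M) F)) :
    Set (GL (Fin M) F) :=
  { g | ∃ p ∈ S, g.val = (p.val).submatrix σ.symm σ.symm }

def blkPair {k : ℕ} (aT bT : Fin k → ℕ) (x : ℕ) : ℕ :=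
  ((Finset.range k).filter (fun j => psum aT (j + 1) + psum bT (j + 1) ≤ x)).card

def isBTab {k : ℕ} (aT bT : Fin k → ℕ) (x : ℕ) : Bool :=
  decide (psum aT (blkPair aT bT x + 1) + psum bT (blkPair aT bT x) ≤ x)

/-- The permutation `σ_T` attached to a table `T = (aT, bT)` (GL recipe). -/
noncomputable def sigmaTab (N : ℕ) {k : ℕ} (aT bT : Fin k → ℕ) : Equiv.Perm (Fin N) :=
  (Tuple.sort (fun x : Fin N => isBTab aT bT (x : ℕ)))⁻¹



/-- Let `char F ≠ 2` and let `y ∈ Sp_N(F)` be a monomial involution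
inducing the signed permutation `w = τ𝔠` of `[0, N)` (for `i < N`, the `i`-th column of `y`
is supported in row `τ i` if `i ∉ 𝔠`, and in row `2N - 1 - τ i` if `i ∈ 𝔠`).  Then `w` is an
involution (`τ² = 1` and `𝔠` is `τ`-stable) and `τ i ≠ i` for every `i ∈ 𝔠`. -/
theorem stmt8 (h2 : (2 : F) ≠ 0) (N : ℕ) (hN : 1 ≤ N)
    (y : GL (Fin (2 * N)) F) (hSp : y ∈ SpSet F N) (hMon : IsMonomial F y.val)
    (hinv : y * y = 1)
    (τ : Equiv.Perm (Fin N)) (c : Finset (Fin N))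
    (hw : ∀ (i : Fin N) (row : Fin (2 * N)),
      y.val row (Fin.castLE (by omega) i) ≠ 0 →
        (row : ℕ) = if i ∈ c then 2 * N - 1 - (τ i : ℕ) else (τ i : ℕ)) :
    (∀ i, τ (τ i) = i) ∧ (∀ i, i ∈ c ↔ τ i ∈ c) ∧ ∀ i ∈ c, τ i ≠ i := by
  classical
  have hle : N ≤ 2 * N := by omega
  choose s hs hsu using hMon.2
  have hmul : y.val * y.val = (1 : Matrix (Fin (2*N)) (Fin (2*N)) F) := by
    have := congrArg Units.val hinv; simpa using this
  have hAA : ∀ j, y.val j (s j) * y.val (s j) j = 1 := by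
    intro j
    have h1 : (y.val * y.val) j j = (1 : Matrix (Fin (2*N)) (Fin (2*N)) F) j j := by rw [hmul]
    rw [Matrix.mul_apply, Matrix.one_apply_eq, Finset.sum_eq_single (s j)] at h1
    · exact h1
    · intro b _ hb
      have hz : y.val b j = 0 := by
        by_contra hne; exact hb (hsu j b hne)
      rw [hz, mul_zero]
    · simp
  have key2 : ∀ j, s (s j) = j := fun j =>
    (hsu (s j) j (left_ne_zero_of_mul_eq_one (hAA j))).symm
  have hsp : (y.val)ᵀ * Jmat F N * y.val = Jmat F N := hSp
  have sympl : ∀ i j, y.val (s i) i * Jmat F N (s i) (s j) * y.val (s j) j = Jmat F N i j := by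
    intro i j
    have h1 : ((y.val)ᵀ * Jmat F N * y.val) i j = Jmat F N i j := by rw [hsp]
    rw [Matrix.mul_apply, Finset.sum_eq_single (s j)] at h1
    · rw [Matrix.mul_apply, Finset.sum_eq_single (s i)] at h1
      · rw [Matrix.transpose_apply] at h1; exact h1
      · intro p _ hp
        have hz : y.val p i = 0 := by
          by_contra hne; exact hp (hsu i p hne)
        rw [Matrix.transpose_apply, hz, zero_mul]
      · simp
    · intro q _ hq
      have hz : y.val q j = 0 := by
        by_contra hne; exact hq (hsu j q hne)
      rw [hz, mul_zero]
    · simp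
  have hJne : ∀ a b : Fin (2*N), (a:ℕ)+(b:ℕ) = 2*N-1 → Jmat F N a b ≠ 0 := by
    intro a b hab
    simp only [Jmat, if_pos hab]
    split
    · exact one_ne_zero
    · exact neg_ne_zero.mpr one_ne_zero
  have hJsum : ∀ a b : Fin (2*N), Jmat F N a b ≠ 0 → (a:ℕ)+(b:ℕ) = 2*N-1 := by
    intro a b h
    by_contra hc
    exact h (by simp [Jmat, hc])
  have srevsum : ∀ j : Fin (2*N), (s j : ℕ) + (s j.rev : ℕ) = 2*N-1 := by
    intro j
    have hj := j.isLt
    have h0 : (j:ℕ) + (j.rev:ℕ) = 2*N-1 := by rw [Fin.val_rev]; omega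
    refine hJsum _ _ (fun hzero => hJne j j.rev h0 ?_)
    rw [← sympl j j.rev, hzero, mul_zero, zero_mul]
  have srev : ∀ j : Fin (2*N), s j.rev = (s j).rev := by
    intro j
    have h0 := srevsum j
    have h1 := (s j).isLt
    apply Fin.ext
    rw [Fin.val_rev]
    omega
  have hτ : ∀ i : Fin N,
      (s (Fin.castLE hle i) : ℕ) = if i ∈ c then 2*N-1-(τ i:ℕ) else (τ i:ℕ) :=
    fun i => hw i _ (hs _)
  have main : ∀ i : Fin N, (i ∈ c ↔ τ i ∈ c) ∧ τ (τ i) = i := by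
    intro i
    have hk2 := key2 (Fin.castLE hle i)
    have h1 := hτ i
    have h2' := hτ (τ i)
    have hbi : (i:ℕ) < N := i.isLt
    have hbti : (τ i : ℕ) < N := (τ i).isLt
    have hbtti : (τ (τ i) : ℕ) < N := (τ (τ i)).isLt
    by_cases hi : i ∈ c
    · rw [if_pos hi] at h1
      have e1 : s (Fin.castLE hle i) = (Fin.castLE hle (τ i)).rev := by
        apply Fin.ext
        rw [Fin.val_rev, Fin.coe_castLE, h1]; omega
      rw [e1, srev] at hk2
      have hval := congrArg Fin.val hk2
      rw [Fin.val_rev, Fin.coe_castLE] at hval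
      by_cases hti : τ i ∈ c
      · rw [if_pos hti] at h2'
        rw [h2'] at hval
        exact ⟨⟨fun _ => hti, fun _ => hi⟩, Fin.ext (by omega)⟩
      · rw [if_neg hti] at h2'
        rw [h2'] at hval
        omega
    · rw [if_neg hi] at h1
      have e1 : s (Fin.castLE hle i) = Fin.castLE hle (τ i) := by
        apply Fin.ext
        rw [Fin.coe_castLE, h1]
      rw [e1] at hk2
      have hval := congrArg Fin.val hk2
      rw [Fin.coe_castLE] at hval
      by_cases hti : τ i ∈ c
      · rw [if_pos hti] at h2'
        rw [h2'] at hval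
        omega
      · rw [if_neg hti] at h2'
        rw [h2'] at hval
        exact ⟨⟨fun h => absurd h hi, fun h => absurd h hti⟩, Fin.ext (by omega)⟩
  refine ⟨fun i => (main i).2, fun i => (main i).1, ?_⟩
  intro i hi hfix
  have h1 := hτ i
  rw [if_pos hi, hfix] at h1
  set u := Fin.castLE hle i with hu
  have huv : (u : ℕ) = (i : ℕ) := Fin.coe_castLE hle i
  have hbi : (i:ℕ) < N := i.isLt
  have hu2 : (u:ℕ) < 2*N := u.isLt
  have e1 : s u = u.rev := by
    apply Fin.ext
    rw [Fin.val_rev, h1, huv]; omega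
  have e2 : s u.rev = u := by rw [srev, e1, Fin.rev_rev]
  have hS := sympl u u.rev
  rw [e1, e2] at hS
  have hrv : (u.rev : ℕ) = 2*N-1-(i:ℕ) := by rw [Fin.val_rev, huv]; omega
  have hJ1 : Jmat F N u.rev u = -1 := by
    simp only [Jmat]
    rw [if_pos (by omega), if_neg (by omega)]
  have hJ2 : Jmat F N u u.rev = 1 := by
    simp only [Jmat]
    rw [if_pos (by omega), if_pos (by omega)]
  rw [hJ1, hJ2] at hS
  have hA := hAA u
  rw [e1] at hA
  exact h2 (by linear_combination -hS - hA)

end Stmt8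
end

section
/- Let N ≥ 1 and α = (n_1,…,n_k; r) be a tuple of nonnegative integers with n_1+⋯+n_k+r = N; set ν_0 = 0 and ν_i = n_1+⋯+n_i. Let Δ₀^{M_α} ⊆ ℝ^N be the set consisting of the vectors e_i − e_{i+1} for all i with ν_{j−1}+1 ≤ i ≤ ν_j − 1 for some j ∈ [1,k], the vectors e_i − e_{i+1} for ν_k + 1 ≤ i ≤ N−1, and, if r ≥ 1, the vector 2e_N. Then for a signed permutation w = τ𝔠 ∈ 𝒲_N the following are equivalent: (a) w maps every element of Δ₀^{M_α} to a positive root; (b) there exist integers d_i ∈ [0, n_i] for i ∈ [1,k] such that 𝔠 is the disjoint union of the intervals [ν_{i−1}+d_i+1, ν_i] (i ∈ [1,k]), τ is order reversing on each interval [ν_{i−1}+d_i+1, ν_i], and τ is order preserving on each interval [ν_{i−1}+1, ν_{i−1}+d_i] (i ∈ [1,k]) and on [ν_k+1, N]. -/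
namespace Stmt10

/-- Partial sums `ν_j = n 0 + ⋯ + n (j-1)` (the tuple is extended by zero beyond `k`). -/
def psum {k : ℕ} (n : Fin k → ℕ) (j : ℕ) : ℕ :=
  ∑ i ∈ Finset.range j, if h : i < k then n ⟨i, h⟩ else 0

/-- A positive root of type `C_N` in `ℝ^N`: `e_i - e_j` (`i < j`) or `e_i + e_j` (`i ≤ j`). -/
def IsPosRoot {N : ℕ} (v : Fin N → ℝ) : Prop :=
  (∃ i j : Fin N, i < j ∧ v = Pi.single i 1 - Pi.single j 1) ∨
  (∃ i j : Fin N, i ≤ j ∧ v = Pi.single i (1 : ℝ) + Pi.single j 1)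

/-- The image `w e_i` of the basis vector `e_i` under the signed permutation `w = τ𝔠`:
`e_{τ i}` if `i ∉ 𝔠` and `-e_{τ i}` if `i ∈ 𝔠`. -/
def wE {N : ℕ} (τ : Equiv.Perm (Fin N)) (c : Finset (Fin N)) (i : Fin N) : Fin N → ℝ :=
  (if i ∈ c then (-1 : ℝ) else 1) • (Pi.single (τ i) 1 : Fin N → ℝ)

section Aux
variable {N : ℕ}

lemma sing (a t : Fin N) : (Pi.single a (1:ℝ) : Fin N → ℝ) t = if t = a then 1 else 0 := by
  simp [Pi.single_apply]

lemma notPos_of_nonpos {v : Fin N → ℝ} (h : ∀ t, v t ≤ 0) : ¬ IsPosRoot v := by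
  rintro (⟨i, j, hij, rfl⟩ | ⟨i, j, hij, rfl⟩)
  · have hi := h i
    rw [Pi.sub_apply, sing, sing, if_pos rfl, if_neg (ne_of_lt hij)] at hi
    norm_num at hi
  · have hi := h i
    rw [Pi.add_apply, sing, sing, if_pos rfl] at hi
    split_ifs at hi <;> norm_num at hi

lemma pos_sub_of_lt {a b : Fin N} (h : a < b) :
    IsPosRoot (Pi.single a (1:ℝ) - Pi.single b 1) := Or.inl ⟨a, b, h, rfl⟩

lemma pos_add (a b : Fin N) : IsPosRoot (Pi.single a (1:ℝ) + Pi.single b 1) := by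
  rcases le_total a b with h | h
  · exact Or.inr ⟨a, b, h, rfl⟩
  · exact Or.inr ⟨b, a, h, add_comm _ _⟩

lemma lt_of_pos_sub {a b : Fin N} (hab : a ≠ b)
    (h : IsPosRoot (Pi.single a (1:ℝ) - Pi.single b 1)) : a < b := by
  rcases h with ⟨i, j, hij, e⟩ | ⟨i, j, hij, e⟩
  · have ea := congrFun e a
    have eb := congrFun e b
    rw [Pi.sub_apply, Pi.sub_apply, sing, sing, sing, sing, if_pos rfl, if_neg hab] at ea
    rw [Pi.sub_apply, Pi.sub_apply, sing, sing, sing, sing, if_neg (Ne.symm hab),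
      if_pos rfl] at eb
    have ha : a = i := by
      by_contra h'; rw [if_neg h'] at ea; split_ifs at ea <;> norm_num at ea
    have hb : b = j := by
      by_contra h'; rw [if_neg h'] at eb; split_ifs at eb <;> norm_num at eb
    rw [ha, hb]; exact hij
  · have eb := congrFun e b
    rw [Pi.sub_apply, Pi.add_apply, sing, sing, sing, sing, if_neg (Ne.symm hab),
      if_pos rfl] at eb
    split_ifs at eb <;> norm_num at eb

lemma chain {α : Type*} (R : α → α → Prop)
    (htr : ∀ a b c, R a b → R b c → R a c) (g : Fin N → α) (a b : ℕ)
    (h : ∀ u : Fin N, a ≤ (u:ℕ) → ∀ hu : (u:ℕ)+1 < N, (u:ℕ)+1 < b →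
      R (g u) (g ⟨(u:ℕ)+1, hu⟩)) :
    ∀ x y : Fin N, a ≤ (x:ℕ) → (x:ℕ) < (y:ℕ) → (y:ℕ) < b → R (g x) (g y) := by
  have key : ∀ m : ℕ, ∀ x y : Fin N, a ≤ (x:ℕ) → (y:ℕ) = (x:ℕ) + m + 1 → (y:ℕ) < b →
      R (g x) (g y) := by
    intro m
    induction m with
    | zero =>
      intro x y hax hxy hyb
      have hu : (x:ℕ)+1 < N := by have := y.isLt; omega
      have hy : y = ⟨(x:ℕ)+1, hu⟩ := Fin.ext (by simp only [Fin.val_mk]; omega)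
      rw [hy]
      exact h x hax hu (by omega)
    | succ m ih =>
      intro x y hax hxy hyb
      have h1 : (x:ℕ)+1 < N := by have := y.isLt; omega
      have hb1 : (x:ℕ)+1 < b := by omega
      exact htr _ _ _ (h x hax h1 hb1)
        (ih ⟨(x:ℕ)+1, h1⟩ y (by show a ≤ (x:ℕ)+1; omega) (by show (y:ℕ) = (x:ℕ)+1+m+1; omega) hyb)
  intro x y hax hxy hyb
  exact key ((y:ℕ) - (x:ℕ) - 1) x y hax (by omega) hyb

lemma wE_of_not_mem {τ : Equiv.Perm (Fin N)} {c : Finset (Fin N)} {x : Fin N} (h : x ∉ c) :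
    wE τ c x = Pi.single (τ x) 1 := by simp [wE, h]

lemma wE_of_mem {τ : Equiv.Perm (Fin N)} {c : Finset (Fin N)} {x : Fin N} (h : x ∈ c) :
    wE τ c x = -Pi.single (τ x) 1 := by simp [wE, h]

variable {k : ℕ} (n : Fin k → ℕ)

lemma psum_succ (j : ℕ) : psum n (j+1) = psum n j + if h : j < k then n ⟨j, h⟩ else 0 :=
  Finset.sum_range_succ _ j

lemma psum_mono : Monotone (psum n) := fun _ _ hab =>
  Finset.sum_le_sum_of_subset (Finset.range_subset_range.2 hab)

lemma psum_k : psum n k = ∑ i, n i := by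
  rw [psum, ← Fin.sum_univ_eq_sum_range]
  exact Finset.sum_congr rfl (fun i _ => by simp [i.isLt])

lemma psum_succ_j (j : Fin k) : psum n ((j:ℕ)+1) = psum n (j:ℕ) + n j := by
  rw [psum_succ, dif_pos j.isLt, Fin.eta]

lemma exists_block : ∀ m, m ≤ k → ∀ x, x < psum n m →
    ∃ j : ℕ, j < m ∧ psum n j ≤ x ∧ x < psum n (j+1) := by
  intro m
  induction m with
  | zero => intro _ x hx; simp [psum] at hx
  | succ m ih =>
    intro hm x hx
    by_cases h : x < psum n m
    · obtain ⟨j, h1, h2, h3⟩ := ih (by omega) x h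
      exact ⟨j, by omega, h2, h3⟩
    · exact ⟨m, by omega, by omega, hx⟩

open Classical in
noncomputable def dfun (n : Fin k → ℕ) (c : Finset (Fin N)) (j : Fin k) : ℕ :=
  if h : ∃ s, s < n j ∧ ∃ hlt : psum n (j:ℕ) + s < N,
      (⟨psum n (j:ℕ) + s, hlt⟩ : Fin N) ∈ c
  then Nat.find h else n j

lemma dfun_le (c : Finset (Fin N)) (j : Fin k) : dfun n c j ≤ n j := by
  unfold dfun
  split
  · next h => exact le_of_lt (Nat.find_spec h).1
  · exact le_rfl

lemma dfun_spec {c : Finset (Fin N)} {j : Fin k}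
    (h : ∃ s, s < n j ∧ ∃ hlt : psum n (j:ℕ) + s < N,
      (⟨psum n (j:ℕ) + s, hlt⟩ : Fin N) ∈ c) :
    dfun n c j < n j ∧ ∃ hlt : psum n (j:ℕ) + dfun n c j < N,
      (⟨psum n (j:ℕ) + dfun n c j, hlt⟩ : Fin N) ∈ c := by
  unfold dfun
  rw [dif_pos h]
  exact Nat.find_spec h

lemma dfun_le_of {c : Finset (Fin N)} {j : Fin k} {s : ℕ} (h1 : s < n j)
    (h2 : ∃ hlt : psum n (j:ℕ) + s < N, (⟨psum n (j:ℕ) + s, hlt⟩ : Fin N) ∈ c) :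
    dfun n c j ≤ s := by
  unfold dfun
  rw [dif_pos ⟨s, h1, h2⟩]
  exact Nat.find_le ⟨h1, h2⟩

end Aux


/-- For `α = (n_1, …, n_k; r)` with `n_1 + ⋯ + n_k + r = N` and a signed
permutation `w = τ𝔠 ∈ 𝒲_N`, the following are equivalent:
(a) `w` maps every element of `Δ₀^{M_α}` to a positive root;
(b) there exist `d_i ∈ [0, n_i]` such that `𝔠` is the union of the intervals
`[ν_{i-1}+d_i, ν_i)` (0-indexed), `τ` is order reversing on each `[ν_{i-1}+d_i, ν_i)` and
order preserving on each `[ν_{i-1}, ν_{i-1}+d_i)` and on `[ν_k, N)`. -/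
theorem stmt10 (N k : ℕ) (hN : 1 ≤ N) (n : Fin k → ℕ) (r : ℕ)
    (hsum : (∑ i, n i) + r = N)
    (τ : Equiv.Perm (Fin N)) (c : Finset (Fin N)) :
    ((∀ j : Fin k, ∀ x y : Fin N, psum n (j : ℕ) ≤ (x : ℕ) → (y : ℕ) = (x : ℕ) + 1 →
        (y : ℕ) < psum n ((j : ℕ) + 1) → IsPosRoot (wE τ c x - wE τ c y)) ∧
      (∀ x y : Fin N, (∑ i, n i) ≤ (x : ℕ) → (y : ℕ) = (x : ℕ) + 1 →
        IsPosRoot (wE τ c x - wE τ c y)) ∧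
      (1 ≤ r → IsPosRoot ((2 : ℝ) • wE τ c ⟨N - 1, by omega⟩))) ↔
    (∃ d : Fin k → ℕ, (∀ i, d i ≤ n i) ∧
      (∀ x : Fin N, x ∈ c ↔
        ∃ j : Fin k, psum n (j : ℕ) + d j ≤ (x : ℕ) ∧ (x : ℕ) < psum n ((j : ℕ) + 1)) ∧
      (∀ j : Fin k, ∀ x y : Fin N, psum n (j : ℕ) + d j ≤ (x : ℕ) → x < y →
        (y : ℕ) < psum n ((j : ℕ) + 1) → τ y < τ x) ∧
      (∀ j : Fin k, ∀ x y : Fin N, psum n (j : ℕ) ≤ (x : ℕ) → x < y →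
        (y : ℕ) < psum n (j : ℕ) + d j → τ x < τ y) ∧
      (∀ x y : Fin N, (∑ i, n i) ≤ (x : ℕ) → x < y → τ x < τ y)) := by
  have hsum' : psum n k = ∑ i, n i := psum_k n
  have hNle : (∑ i, n i) ≤ N := by omega
  have hpsub : ∀ j : Fin k, psum n ((j:ℕ)+1) ≤ ∑ i, n i := by
    intro j
    rw [← hsum']
    exact psum_mono n j.isLt
  have htauNe : ∀ x y : Fin N, (x:ℕ) ≠ (y:ℕ) → τ x ≠ τ y := by
    intro x y hxy h
    exact hxy (congrArg Fin.val (τ.injective h))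
  constructor
  · rintro ⟨hA1, hA2, hA3⟩
    classical
    -- successor closure inside a block
    have hstep1 : ∀ (j : Fin k) (x : Fin N), psum n (j:ℕ) ≤ (x:ℕ) →
        ∀ h1 : (x:ℕ)+1 < N, (x:ℕ)+1 < psum n ((j:ℕ)+1) → x ∈ c →
        (⟨(x:ℕ)+1, h1⟩ : Fin N) ∈ c := by
      intro j x hx h1 h2 hxc
      by_contra hyc
      have hpr := hA1 j x ⟨(x:ℕ)+1, h1⟩ hx rfl h2
      rw [wE_of_mem hxc, wE_of_not_mem hyc] at hpr
      exact notPos_of_nonpos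
        (fun t => by
          rw [Pi.sub_apply, Pi.neg_apply, sing, sing]
          split_ifs <;> norm_num) hpr
    -- successor closure in the tail
    have hstep2 : ∀ (x : Fin N), (∑ i, n i) ≤ (x:ℕ) →
        ∀ h1 : (x:ℕ)+1 < N, x ∈ c → (⟨(x:ℕ)+1, h1⟩ : Fin N) ∈ c := by
      intro x hx h1 hxc
      by_contra hyc
      have hpr := hA2 x ⟨(x:ℕ)+1, h1⟩ hx rfl
      rw [wE_of_mem hxc, wE_of_not_mem hyc] at hpr
      exact notPos_of_nonpos
        (fun t => by
          rw [Pi.sub_apply, Pi.neg_apply, sing, sing]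
          split_ifs <;> norm_num) hpr
    have hlast : 1 ≤ r → (⟨N-1, by omega⟩ : Fin N) ∉ c := by
      intro hr hmc
      have hpr := hA3 hr
      rw [wE_of_mem hmc] at hpr
      exact notPos_of_nonpos
        (fun t => by
          rw [Pi.smul_apply, Pi.neg_apply, sing]
          split_ifs <;> norm_num) hpr
    have tail_not : ∀ x : Fin N, (∑ i, n i) ≤ (x:ℕ) → x ∉ c := by
      intro x hx hxc
      have hr : 1 ≤ r := by have := x.isLt; omega
      have key : ∀ m : ℕ, ∀ h : (x:ℕ)+m < N, (⟨(x:ℕ)+m, h⟩ : Fin N) ∈ c := by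
        intro m
        induction m with
        | zero => intro h; simpa using hxc
        | succ m ih =>
          intro h
          have hm : (x:ℕ)+m < N := by omega
          exact hstep2 ⟨(x:ℕ)+m, hm⟩ (by simp only [Fin.val_mk]; omega) h (ih hm)
      have hc1 := key (N-1-(x:ℕ)) (by omega)
      have he : (⟨(x:ℕ)+(N-1-(x:ℕ)), by omega⟩ : Fin N) = ⟨N-1, by omega⟩ :=
        Fin.ext (by simp only [Fin.val_mk]; omega)
      rw [he] at hc1
      exact hlast hr hc1
    -- the block characterization for d := dfun n c
    have hblock : ∀ (j : Fin k) (x : Fin N), psum n (j:ℕ) ≤ (x:ℕ) →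
        (x:ℕ) < psum n ((j:ℕ)+1) → (x ∈ c ↔ psum n (j:ℕ) + dfun n c j ≤ (x:ℕ)) := by
      intro j x h1 h2
      have hbd : psum n ((j:ℕ)+1) = psum n (j:ℕ) + n j := psum_succ_j n j
      constructor
      · intro hxc
        have h2' : ∃ hlt : psum n (j:ℕ) + ((x:ℕ) - psum n (j:ℕ)) < N,
            (⟨psum n (j:ℕ) + ((x:ℕ) - psum n (j:ℕ)), hlt⟩ : Fin N) ∈ c := by
          refine ⟨by have := x.isLt; omega, ?_⟩
          have he : (⟨psum n (j:ℕ) + ((x:ℕ) - psum n (j:ℕ)), by have := x.isLt; omega⟩ :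
              Fin N) = x := Fin.ext (by simp only [Fin.val_mk]; omega)
          rw [he]; exact hxc
        have := dfun_le_of n (by omega) h2'
        omega
      · intro hge
        have hPj : ∃ s, s < n j ∧ ∃ hlt : psum n (j:ℕ) + s < N,
            (⟨psum n (j:ℕ) + s, hlt⟩ : Fin N) ∈ c := by
          by_contra hP
          have hdn : dfun n c j = n j := by unfold dfun; rw [dif_neg hP]
          omega
        obtain ⟨hflt, hfN, hfc⟩ := dfun_spec n hPj
        have key : ∀ m : ℕ, psum n (j:ℕ) + dfun n c j + m < psum n ((j:ℕ)+1) →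
            ∀ h : psum n (j:ℕ) + dfun n c j + m < N, (⟨psum n (j:ℕ) + dfun n c j + m, h⟩ : Fin N) ∈ c := by
          intro m
          induction m with
          | zero => intro _ h; exact hfc
          | succ m ih =>
            intro hlt h
            have hm : psum n (j:ℕ) + dfun n c j + m < N := by omega
            exact hstep1 j ⟨psum n (j:ℕ) + dfun n c j + m, hm⟩
              (by simp only [Fin.val_mk]; omega) h (by simp only [Fin.val_mk]; omega)
              (ih (by omega) hm)
        have hc1 := key ((x:ℕ) - (psum n (j:ℕ) + dfun n c j)) (by omega)
          (by have := x.isLt; omega)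
        have he : (⟨psum n (j:ℕ) + dfun n c j + ((x:ℕ) - (psum n (j:ℕ) + dfun n c j)),
            by have := x.isLt; omega⟩ : Fin N) = x := Fin.ext (by simp only [Fin.val_mk]; omega)
        rw [he] at hc1
        exact hc1
    refine ⟨dfun n c, fun j => dfun_le n c j, ?_, ?_, ?_, ?_⟩
    · intro x
      constructor
      · intro hxc
        have hxlt : (x:ℕ) < ∑ i, n i := by
          by_contra h
          exact tail_not x (by omega) hxc
        rw [← hsum'] at hxlt
        obtain ⟨j, hjk, h1, h2⟩ := exists_block n k le_rfl (x:ℕ) hxlt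
        exact ⟨⟨j, hjk⟩, (hblock ⟨j, hjk⟩ x h1 h2).1 hxc, h2⟩
      · rintro ⟨j, h1, h2⟩
        exact (hblock j x (by omega) h2).2 h1
    · -- τ decreasing on [psum + d, psum (j+1))
      intro j x y hx hxy hy
      refine chain (fun a b : Fin N => b < a) (fun a b c h1 h2 => lt_trans h2 h1) τ
        (psum n (j:ℕ) + dfun n c j) (psum n ((j:ℕ)+1)) ?_ x y hx hxy hy
      intro u hu huN hub
      have hbd : psum n ((j:ℕ)+1) = psum n (j:ℕ) + n j := psum_succ_j n j
      have huc : u ∈ c := (hblock j u (by omega) (by omega)).2 (by omega)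
      have hvc : (⟨(u:ℕ)+1, huN⟩ : Fin N) ∈ c :=
        (hblock j ⟨(u:ℕ)+1, huN⟩ (by simp only [Fin.val_mk]; omega)
          (by simp only [Fin.val_mk]; omega)).2 (by simp only [Fin.val_mk]; omega)
      have hpr := hA1 j u ⟨(u:ℕ)+1, huN⟩ (by omega) rfl (by simp only [Fin.val_mk]; omega)
      rw [wE_of_mem huc, wE_of_mem hvc, neg_sub_neg] at hpr
      exact lt_of_pos_sub (htauNe _ _ (by simp only [Fin.val_mk]; omega)) hpr
    · -- τ increasing on [psum, psum + d)
      intro j x y hx hxy hy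
      refine chain (fun a b : Fin N => a < b) (fun a b c h1 h2 => lt_trans h1 h2) τ
        (psum n (j:ℕ)) (psum n (j:ℕ) + dfun n c j) ?_ x y hx hxy hy
      intro u hu huN hub
      have hbd : psum n ((j:ℕ)+1) = psum n (j:ℕ) + n j := psum_succ_j n j
      have hdle : dfun n c j ≤ n j := dfun_le n c j
      have huc : u ∉ c := fun hc => by
        have := (hblock j u (by omega) (by omega)).1 hc; omega
      have hvc : (⟨(u:ℕ)+1, huN⟩ : Fin N) ∉ c := fun hc => by
        have := (hblock j ⟨(u:ℕ)+1, huN⟩ (by simp only [Fin.val_mk]; omega)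
          (by simp only [Fin.val_mk]; omega)).1 hc
        simp only [Fin.val_mk] at this; omega
      have hpr := hA1 j u ⟨(u:ℕ)+1, huN⟩ (by omega) rfl (by simp only [Fin.val_mk]; omega)
      rw [wE_of_not_mem huc, wE_of_not_mem hvc] at hpr
      exact lt_of_pos_sub (htauNe _ _ (by simp only [Fin.val_mk]; omega)) hpr
    · -- τ increasing on the tail
      intro x y hx hxy
      refine chain (fun a b : Fin N => a < b) (fun a b c h1 h2 => lt_trans h1 h2) τ
        (∑ i, n i) N ?_ x y hx hxy y.isLt
      intro u hu huN hub
      have huc : u ∉ c := tail_not u hu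
      have hvc : (⟨(u:ℕ)+1, huN⟩ : Fin N) ∉ c :=
        tail_not _ (by simp only [Fin.val_mk]; omega)
      have hpr := hA2 u ⟨(u:ℕ)+1, huN⟩ hu rfl
      rw [wE_of_not_mem huc, wE_of_not_mem hvc] at hpr
      exact lt_of_pos_sub (htauNe _ _ (by simp only [Fin.val_mk]; omega)) hpr
  · rintro ⟨d, hd, hmem, hdec, hinc, htail⟩
    have tail_not : ∀ x : Fin N, (∑ i, n i) ≤ (x:ℕ) → x ∉ c := by
      intro x hx hxc
      obtain ⟨j, h1, h2⟩ := (hmem x).1 hxc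
      have := hpsub j
      omega
    have blocks_nc : ∀ (j : Fin k) (x : Fin N), psum n (j:ℕ) ≤ (x:ℕ) →
        (x:ℕ) < psum n (j:ℕ) + d j → x ∉ c := by
      intro j x h1 h2 hxc
      obtain ⟨j', h1', h2'⟩ := (hmem x).1 hxc
      by_cases hjj : j = j'
      · subst hjj; omega
      · have hx2 : (x:ℕ) < psum n ((j:ℕ)+1) := by
          have := hd j
          have := psum_succ_j n j
          omega
        rcases lt_or_gt_of_ne hjj with h | h
        · have : psum n ((j:ℕ)+1) ≤ psum n (j':ℕ) := psum_mono n (by exact_mod_cast h)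
          omega
        · have : psum n ((j':ℕ)+1) ≤ psum n (j:ℕ) := psum_mono n (by exact_mod_cast h)
          omega
    refine ⟨?_, ?_, ?_⟩
    · intro j x y hx hyx hy
      have hxlt : (x:ℕ) < psum n ((j:ℕ)+1) := by omega
      rcases lt_trichotomy ((x:ℕ)+1) (psum n (j:ℕ) + d j) with h | h | h
      · have hxc := blocks_nc j x hx (by omega)
        have hyc := blocks_nc j y (by omega) (by omega)
        rw [wE_of_not_mem hxc, wE_of_not_mem hyc]
        exact pos_sub_of_lt (hinc j x y hx (Fin.lt_def.mpr (by omega)) (by omega))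
      · have hxc := blocks_nc j x hx (by omega)
        have hyc : y ∈ c := (hmem y).2 ⟨j, by omega, hy⟩
        rw [wE_of_not_mem hxc, wE_of_mem hyc, sub_neg_eq_add]
        exact pos_add _ _
      · have hxc : x ∈ c := (hmem x).2 ⟨j, by omega, hxlt⟩
        have hyc : y ∈ c := (hmem y).2 ⟨j, by omega, hy⟩
        rw [wE_of_mem hxc, wE_of_mem hyc, neg_sub_neg]
        exact pos_sub_of_lt (hdec j x y (by omega) (Fin.lt_def.mpr (by omega)) hy)
    · intro x y hx hyx
      have hxc := tail_not x hx
      have hyc := tail_not y (by omega)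
      rw [wE_of_not_mem hxc, wE_of_not_mem hyc]
      exact pos_sub_of_lt (htail x y hx (Fin.lt_def.mpr (by omega)))
    · intro hr
      have hnc : (⟨N-1, by omega⟩ : Fin N) ∉ c :=
        tail_not _ (by simp only [Fin.val_mk]; omega)
      rw [wE_of_not_mem hnc, two_smul]
      exact pos_add _ _

end Stmt10
end

section
/- Let α = (n_1,…,n_k) and β = (m_1,…,m_t) be compositions of N, with partial sums ν_0 = 0, ν_j = n_1+⋯+n_j and μ_0 = 0, μ_i = m_1+⋯+m_i. Consider the set S of permutations w of [1,N] such that: (i) w is order preserving on each interval [ν_{j−1}+1, ν_j]; (ii) w⁻¹ is order preserving on each interval [μ_{i−1}+1, μ_i]; (iii) for every j ∈ [1,k] there exists i ∈ [1,t] with w([ν_{j−1}+1, ν_j]) ⊆ [μ_{i−1}+1, μ_i]. Then S is in bijection with the set of ordered partitions (A_1,…,A_t) of [1,k] into t (possibly empty) subsets satisfying m_i = Σ_{j∈A_i} n_j for all i ∈ [1,t]; the element of S attached to (A_1,…,A_t) is the unique permutation that is order preserving from ⋃_{j∈A_i}[ν_{j−1}+1, ν_j] onto [μ_{i−1}+1,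 μ_i] for every i ∈ [1,t]. -/
namespace Stmt11

/-- Partial sums `ν_j = n 0 + ⋯ + n (j-1)` (the tuple is extended by zero beyond `k`). -/
def psum {k : ℕ} (n : Fin k → ℕ) (j : ℕ) : ℕ :=
  ∑ i ∈ Finset.range j, if h : i < k then n ⟨i, h⟩ else 0

/-- Block index of a position `x` with respect to the composition `n`. -/
def blkIdx {k : ℕ} (n : Fin k → ℕ) (x : ℕ) : ℕ :=
  ((Finset.range k).filter (fun j => psum n (j + 1) ≤ x)).card

/-- The part (among `1, …, t`) to which the position `x` is sent: the value of `f` on the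
block of `x`. -/
def partKey {k t : ℕ} (n : Fin k → ℕ) (f : Fin k → Fin t) (x : ℕ) : ℕ :=
  if h : blkIdx n x < k then (f ⟨blkIdx n x, h⟩ : ℕ) else 0

/-- The permutation attached to an ordered partition `(A_1, …, A_t)` of `[1,k]` (encoded by
`f : Fin k → Fin t`, `A_i = f⁻¹(i)`): the unique permutation that is order preserving from
`⋃_{j ∈ A_i} [ν_{j-1}+1, ν_j]` onto `[μ_{i-1}+1, μ_i]` for every `i`.  It is the inverse of
the stable sorting permutation sorting positions by the part of their block. -/
noncomputable def phi (N : ℕ) {k t : ℕ} (n : Fin k → ℕ) (f : Fin k → Fin t) :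
    Equiv.Perm (Fin N) :=
  (Tuple.sort (fun x : Fin N => partKey n f (x : ℕ)))⁻¹

/-- Membership of the position `x` in `⋃_{j ∈ A_i} [ν_{j-1}, ν_j)` (0-indexed). -/
def inPart {N k t : ℕ} (n : Fin k → ℕ) (f : Fin k → Fin t) (i : Fin t) (x : Fin N) : Prop :=
  ∃ j : Fin k, f j = i ∧ psum n (j : ℕ) ≤ (x : ℕ) ∧ (x : ℕ) < psum n ((j : ℕ) + 1)

section psum
variable {k : ℕ} (n : Fin k → ℕ)

lemma psum_succ {j : ℕ} (h : j < k) : psum n (j + 1) = psum n j + n ⟨j, h⟩ := by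
  simp [psum, Finset.sum_range_succ, h]

lemma psum_mono : Monotone (psum n) := fun a b hab =>
  Finset.sum_le_sum_of_subset (Finset.range_subset_range.2 hab)

lemma psum_top : psum n k = ∑ j, n j := by
  have : (∑ j, n j) = ∑ j : Fin k, (fun i => if h : i < k then n ⟨i, h⟩ else 0) (j : ℕ) := by
    apply Finset.sum_congr rfl; intro j _; simp
  rw [this, psum, ← Fin.sum_univ_eq_sum_range]

lemma blkIdx_eq {x j : ℕ} (hj : j < k) (h1 : psum n j ≤ x) (h2 : x < psum n (j + 1)) :
    blkIdx n x = j := by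
  have : (Finset.range k).filter (fun j' => psum n (j' + 1) ≤ x) = Finset.range j := by
    ext j'
    simp only [Finset.mem_filter, Finset.mem_range]
    constructor
    · rintro ⟨-, hle⟩
      by_contra hc
      exact absurd (le_trans (psum_mono n (by omega : j + 1 ≤ j' + 1)) hle) (not_le.2 h2)
    · intro hlt
      exact ⟨lt_trans hlt hj, le_trans (psum_mono n (by omega : j' + 1 ≤ j)) h1⟩
  rw [blkIdx, this, Finset.card_range]

lemma blkIdx_spec {x : ℕ} (hx : x < psum n k) :
    blkIdx n x < k ∧ psum n (blkIdx n x) ≤ x ∧ x < psum n (blkIdx n x + 1) := by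
  have hP : ∃ j, x < psum n (j + 1) := ⟨k, lt_of_lt_of_le hx (psum_mono n (Nat.le_succ k))⟩
  set j := Nat.find hP with hjdef
  have hj2 : x < psum n (j + 1) := Nat.find_spec hP
  have hk0 : 0 < k := by
    by_contra hc
    simp only [not_lt, Nat.le_zero] at hc
    subst hc
    simp [psum] at hx
  have hjk : j < k := by
    have : j ≤ k - 1 := Nat.find_min' hP (by
      have : k - 1 + 1 = k := Nat.succ_pred_eq_of_pos hk0
      rw [this]; exact hx)
    omega
  have hj1 : psum n j ≤ x := by
    rcases Nat.eq_zero_or_pos j with h0 | h0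
    · simp [h0, psum]
    · have := Nat.find_min hP (show j - 1 < j by omega)
      have hrw : j - 1 + 1 = j := by omega
      rw [hrw] at this
      omega
  have := blkIdx_eq n hjk hj1 hj2
  rw [this]
  exact ⟨hjk, hj1, hj2⟩

lemma blkIdx_mono : Monotone (blkIdx n) := by
  intro a b hab
  apply Finset.card_le_card
  intro j hj
  simp only [Finset.mem_filter] at hj ⊢
  exact ⟨hj.1, le_trans hj.2 hab⟩

end psum

lemma card_val_Ico {N a b : ℕ} (hb : b ≤ N) :
    ((Finset.univ : Finset (Fin N)).filter fun x : Fin N => a ≤ (x : ℕ) ∧ (x : ℕ) < b).card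
      = b - a := by
  rw [← Nat.card_Ico a b, ← Finset.card_image_of_injective _ Fin.val_injective]
  congr 1
  ext c
  simp only [Finset.mem_image, Finset.mem_filter, Finset.mem_univ, true_and, Finset.mem_Ico]
  constructor
  · rintro ⟨x, hx, rfl⟩; exact hx
  · rintro ⟨h1, h2⟩; exact ⟨⟨c, lt_of_lt_of_le h2 hb⟩, ⟨h1, h2⟩, rfl⟩

lemma mem_iff_lt_card {N : ℕ} {s : Finset (Fin N)}
    (hs : ∀ ⦃a b : Fin N⦄, a ≤ b → b ∈ s → a ∈ s) (y : Fin N) :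
    y ∈ s ↔ (y : ℕ) < s.card := by
  constructor
  · intro hy
    have hsub : (Finset.univ.filter fun z : Fin N => 0 ≤ (z : ℕ) ∧ (z : ℕ) < (y : ℕ) + 1) ⊆ s := by
      intro z hz
      simp only [Finset.mem_filter, Finset.mem_univ, true_and] at hz
      exact hs (show z ≤ y from Fin.le_def.2 (by omega)) hy
    have hc := Finset.card_le_card hsub
    rw [card_val_Ico (show (y : ℕ) + 1 ≤ N from y.isLt)] at hc
    omega
  · intro hc
    by_contra hy
    have hsub : s ⊆ Finset.univ.filter fun z : Fin N => 0 ≤ (z : ℕ) ∧ (z : ℕ) < (y : ℕ) := by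
      intro z hz
      simp only [Finset.mem_filter, Finset.mem_univ, true_and]
      refine ⟨Nat.zero_le _, ?_⟩
      by_contra hzy
      exact hy (hs (show y ≤ z from Fin.le_def.2 (by omega)) hz)
    have := Finset.card_le_card hsub
    rw [card_val_Ico (le_of_lt y.isLt)] at this
    omega



lemma filter_card_comp {N : ℕ} (σ : Equiv.Perm (Fin N)) (p : Fin N → Prop) [DecidablePred p] :
    (Finset.univ.filter fun y => p (σ y)).card = (Finset.univ.filter p).card := by
  rw [← Finset.card_image_of_injective _ σ.injective]
  congr 1
  ext x
  simp only [Finset.mem_image, Finset.mem_filter, Finset.mem_univ, true_and]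
  constructor
  · rintro ⟨y, hy, rfl⟩; exact hy
  · intro hx; exact ⟨σ.symm x, by simpa using hx, by simp⟩

lemma mono_lt_iff {N : ℕ} {g : Fin N → ℕ} (hg : Monotone g) (c : ℕ) (y : Fin N) :
    g y < c ↔ (y : ℕ) < (Finset.univ.filter fun z => g z < c).card := by
  have hdown : ∀ ⦃a b : Fin N⦄, a ≤ b →
      b ∈ (Finset.univ.filter fun z => g z < c) → a ∈ (Finset.univ.filter fun z => g z < c) := by
    intro a b hab hb
    simp only [Finset.mem_filter, Finset.mem_univ, true_and] at hb ⊢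
    exact lt_of_le_of_lt (hg hab) hb
  rw [← mem_iff_lt_card hdown y]
  simp

lemma card_key_lt {N t : ℕ} (m : Fin t → ℕ) (key : Fin N → ℕ)
    (hc : ∀ i : Fin t, (Finset.univ.filter fun x => key x = (i : ℕ)).card = m i) :
    ∀ c, c ≤ t → (Finset.univ.filter fun x => key x < c).card = psum m c := by
  intro c
  induction c with
  | zero => intro _; simp [psum]
  | succ c ih =>
    intro hct
    have hctt : c < t := hct
    have h1 : (Finset.univ.filter fun x : Fin N => key x < c + 1)
        = (Finset.univ.filter fun x => key x < c) ∪ (Finset.univ.filter fun x => key x = c) := by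
      rw [← Finset.filter_or]
      apply Finset.filter_congr
      intro x _
      constructor
      · intro h; omega
      · intro h; omega
    have hdisj : Disjoint (Finset.univ.filter fun x : Fin N => key x < c)
        (Finset.univ.filter fun x : Fin N => key x = c) := by
      rw [Finset.disjoint_left]
      intro x hx hx'
      simp only [Finset.mem_filter, Finset.mem_univ, true_and] at hx hx'
      omega
    rw [h1, Finset.card_union_of_disjoint hdisj, ih (by omega), hc ⟨c, hctt⟩,
      psum_succ m hctt]

lemma sort_symm_lt {N : ℕ} (key : Fin N → ℕ) {x y : Fin N} (hxy : x < y)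
    (hkey : key x = key y) : (Tuple.sort key)⁻¹ x < (Tuple.sort key)⁻¹ y := by
  set σ := Tuple.sort key with hσ
  have hst := (Tuple.eq_sort_iff.1 hσ).2
  rcases lt_trichotomy (σ⁻¹ x) (σ⁻¹ y) with h | h | h
  · exact h
  · exact absurd ((Equiv.injective σ⁻¹) h) (ne_of_lt hxy)
  · exfalso
    have := hst _ _ h (by simp [hkey])
    simp only [Equiv.Perm.coe_inv, Equiv.apply_symm_apply] at this
    exact absurd this (not_lt.2 hxy.le)

section main
variable {N k t : ℕ} {n : Fin k → ℕ} {m : Fin t → ℕ}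

lemma blk_lt (hns : psum n k = N) (x : Fin N) : blkIdx n (x : ℕ) < k :=
  (blkIdx_spec n (by rw [hns]; exact x.isLt)).1

lemma partKey_eq (hns : psum n k = N) (f : Fin k → Fin t) (x : Fin N) :
    partKey n f (x : ℕ) = (f ⟨blkIdx n (x : ℕ), blk_lt hns x⟩ : ℕ) :=
  dif_pos _

lemma inPart_iff (hns : psum n k = N) (f : Fin k → Fin t) (i : Fin t) (x : Fin N) :
    inPart n f i x ↔ partKey n f (x : ℕ) = (i : ℕ) := by
  rw [partKey_eq hns]
  constructor
  · rintro ⟨j, hfj, h1, h2⟩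
    have hb : blkIdx n (x : ℕ) = (j : ℕ) := blkIdx_eq n j.isLt h1 h2
    have : (⟨blkIdx n (x : ℕ), blk_lt hns x⟩ : Fin k) = j := Fin.ext hb
    rw [this, hfj]
  · intro h
    refine ⟨⟨blkIdx n (x : ℕ), blk_lt hns x⟩, Fin.val_injective h,
      (blkIdx_spec n (by rw [hns]; exact x.isLt)).2.1,
      (blkIdx_spec n (by rw [hns]; exact x.isLt)).2.2⟩

lemma card_blk (hns : psum n k = N) (j : Fin k) :
    (Finset.univ.filter fun x : Fin N => blkIdx n (x : ℕ) = (j : ℕ)).card = n j := by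
  have he : (Finset.univ.filter fun x : Fin N => blkIdx n (x : ℕ) = (j : ℕ))
      = Finset.univ.filter fun x : Fin N =>
          psum n (j : ℕ) ≤ (x : ℕ) ∧ (x : ℕ) < psum n ((j : ℕ) + 1) := by
    apply Finset.filter_congr
    intro x _
    constructor
    · intro h
      have hs := blkIdx_spec n (show (x : ℕ) < psum n k by rw [hns]; exact x.isLt)
      rw [h] at hs
      exact ⟨hs.2.1, hs.2.2⟩
    · intro h
      exact blkIdx_eq n j.isLt h.1 h.2
  rw [he, card_val_Ico (show psum n ((j : ℕ) + 1) ≤ N by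
    rw [← hns]; exact psum_mono n j.isLt)]
  rw [psum_succ n j.isLt]
  simp

lemma card_fiber (hns : psum n k = N) (f : Fin k → Fin t) (i : Fin t) :
    (Finset.univ.filter fun x : Fin N => partKey n f (x : ℕ) = (i : ℕ)).card
      = ∑ j ∈ Finset.univ.filter (fun j => f j = i), n j := by
  have he : (Finset.univ.filter fun x : Fin N => partKey n f (x : ℕ) = (i : ℕ))
      = (Finset.univ.filter (fun j : Fin k => f j = i)).biUnion
          (fun j => Finset.univ.filter fun x : Fin N => blkIdx n (x : ℕ) = (j : ℕ)) := by
    ext x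
    simp only [Finset.mem_filter, Finset.mem_univ, true_and, Finset.mem_biUnion]
    constructor
    · intro h
      rw [partKey_eq hns] at h
      exact ⟨⟨blkIdx n (x : ℕ), blk_lt hns x⟩, Fin.val_injective h, rfl⟩
    · rintro ⟨j, hfj, hb⟩
      rw [partKey_eq hns]
      have : (⟨blkIdx n (x : ℕ), blk_lt hns x⟩ : Fin k) = j := Fin.ext hb
      rw [this, hfj]
  rw [he, Finset.card_biUnion]
  · exact Finset.sum_congr rfl fun j _ => card_blk hns j
  · intro j1 _ j2 _ hne
    rw [Function.onFun, Finset.disjoint_left]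
    intro x hx1 hx2
    simp only [Finset.mem_filter, Finset.mem_univ, true_and] at hx1 hx2
    exact hne (Fin.ext (hx1 ▸ hx2 ▸ rfl))

lemma key_sort_iff (hns : psum n k = N) (f : Fin k → Fin t)
    (hf : ∀ i : Fin t,
      (Finset.univ.filter fun x : Fin N => partKey n f (x : ℕ) = (i : ℕ)).card = m i)
    (i : Fin t) (y : Fin N) :
    partKey n f ((Tuple.sort (fun x : Fin N => partKey n f (x : ℕ)) y : Fin N) : ℕ) = (i : ℕ) ↔
      psum m (i : ℕ) ≤ (y : ℕ) ∧ (y : ℕ) < psum m ((i : ℕ) + 1) := by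
  set key := fun x : Fin N => partKey n f (x : ℕ) with hkeydef
  set σ := Tuple.sort key with hσ
  have hmono : Monotone (fun y => key (σ y)) := Tuple.monotone_sort key
  have hlt : ∀ c, c ≤ t → (key (σ y) < c ↔ (y : ℕ) < psum m c) := by
    intro c hct
    rw [mono_lt_iff hmono c y, filter_card_comp σ (fun x => key x < c),
      card_key_lt m key hf c hct]
  have e1 := hlt (i : ℕ) (le_of_lt i.isLt)
  have e2 := hlt ((i : ℕ) + 1) i.isLt
  have hiff : key (σ y) = (i : ℕ) ↔ (key (σ y) < (i : ℕ) + 1 ∧ ¬ key (σ y) < (i : ℕ)) := by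
    omega
  rw [show partKey n f ((σ y : Fin N) : ℕ) = key (σ y) from rfl, hiff, e1, e2]
  omega

end main

/-- Let `α = (n_1,…,n_k)` and `β = (m_1,…,m_t)` be compositions of `N`.
The set `S` of permutations `w` of `[1,N]` such that (i) `w` is order preserving on each
interval `[ν_{j-1}+1, ν_j]`, (ii) `w⁻¹` is order preserving on each `[μ_{i-1}+1, μ_i]`, and
(iii) each `w([ν_{j-1}+1, ν_j])` is contained in some `[μ_{i-1}+1, μ_i]`, is in bijection
with the set of ordered partitions `(A_1,…,A_t)` of `[1,k]` (encoded by `f : Fin k → Fin t`)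
with `m_i = ∑_{j ∈ A_i} n_j`; the element of `S` attached to `(A_1,…,A_t)` is the unique
permutation order preserving from `⋃_{j ∈ A_i} [ν_{j-1}+1, ν_j]` onto `[μ_{i-1}+1, μ_i]`
for every `i`. -/
theorem stmt11 (N k t : ℕ) (n : Fin k → ℕ) (m : Fin t → ℕ)
    (hn : ∀ j, 0 < n j) (hm : ∀ i, 0 < m i)
    (hns : ∑ j, n j = N) (hms : ∑ i, m i = N) :
    (∀ f : Fin k → Fin t,
      (∀ i : Fin t, m i = ∑ j ∈ Finset.univ.filter (fun j => f j = i), n j) →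
      ∀ i : Fin t,
        (∀ x y : Fin N, inPart n f i x → inPart n f i y → x < y → phi N n f x < phi N n f y) ∧
        (∀ y : Fin N, (psum m (i : ℕ) ≤ (y : ℕ) ∧ (y : ℕ) < psum m ((i : ℕ) + 1)) ↔
          ∃ x : Fin N, inPart n f i x ∧ phi N n f x = y)) ∧
    Set.BijOn (phi N n)
      { f | ∀ i : Fin t, m i = ∑ j ∈ Finset.univ.filter (fun j => f j = i), n j }
      { w : Equiv.Perm (Fin N) |
        (∀ j : Fin k, ∀ x y : Fin N, psum n (j : ℕ) ≤ (x : ℕ) → x < y →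
          (y : ℕ) < psum n ((j : ℕ) + 1) → w x < w y) ∧
        (∀ i : Fin t, ∀ x y : Fin N, psum m (i : ℕ) ≤ (x : ℕ) → x < y →
          (y : ℕ) < psum m ((i : ℕ) + 1) → w.symm x < w.symm y) ∧
        (∀ j : Fin k, ∃ i : Fin t, ∀ x : Fin N, psum n (j : ℕ) ≤ (x : ℕ) →
          (x : ℕ) < psum n ((j : ℕ) + 1) →
            psum m (i : ℕ) ≤ (w x : ℕ) ∧ (w x : ℕ) < psum m ((i : ℕ) + 1)) } := by
  have hns' : psum n k = N := by rw [psum_top]; exact hns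
  have hms' : psum m t = N := by rw [psum_top]; exact hms
  constructor
  · -- Part 1
    intro f hf i
    have hcard : ∀ i : Fin t,
        (Finset.univ.filter fun x : Fin N => partKey n f (x : ℕ) = (i : ℕ)).card = m i :=
      fun i => (card_fiber hns' f i).trans (hf i).symm
    constructor
    · intro x y hx hy hxy
      have hkx := (inPart_iff hns' f i x).1 hx
      have hky := (inPart_iff hns' f i y).1 hy
      exact sort_symm_lt _ hxy (hkx.trans hky.symm)
    · intro y
      constructor
      · rintro ⟨h1, h2⟩
        refine ⟨Tuple.sort (fun x : Fin N => partKey n f (x : ℕ)) y, ?_, ?_⟩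
        · exact (inPart_iff hns' f i _).2 ((key_sort_iff hns' f hcard i y).2 ⟨h1, h2⟩)
        · simp [phi]
      · rintro ⟨x, hx, hxy⟩
        have hxe : x = Tuple.sort (fun x : Fin N => partKey n f (x : ℕ)) y := by
          rw [← hxy]; simp [phi]
        rw [hxe] at hx
        exact (key_sort_iff hns' f hcard i y).1 ((inPart_iff hns' f i _).1 hx)
  · -- Part 2: bijection
    refine ⟨?_, ?_, ?_⟩
    · -- MapsTo
      intro f hf
      have hcard : ∀ i : Fin t,
          (Finset.univ.filter fun x : Fin N => partKey n f (x : ℕ) = (i : ℕ)).card = m i :=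
        fun i => (card_fiber hns' f i).trans (hf i).symm
      have hst := (Tuple.eq_sort_iff.1
        (rfl : Tuple.sort (fun x : Fin N => partKey n f (x : ℕ))
          = Tuple.sort (fun x : Fin N => partKey n f (x : ℕ)))).2
      refine ⟨?_, ?_, ?_⟩
      · intro j x y h1 hxy h2
        have hxy' : (x : ℕ) < (y : ℕ) := hxy
        have hbx : blkIdx n (x : ℕ) = (j : ℕ) := blkIdx_eq n j.isLt h1 (by omega)
        have hby : blkIdx n (y : ℕ) = (j : ℕ) := blkIdx_eq n j.isLt (by omega) h2
        have hk : partKey n f (x : ℕ) = partKey n f (y : ℕ) := by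
          rw [partKey_eq hns', partKey_eq hns']
          have he : (⟨blkIdx n (x : ℕ), blk_lt hns' x⟩ : Fin k)
              = ⟨blkIdx n (y : ℕ), blk_lt hns' y⟩ := Fin.ext (hbx.trans hby.symm)
          rw [he]
        exact sort_symm_lt _ hxy hk
      · intro i x y h1 hxy h2
        have hxy' : (x : ℕ) < (y : ℕ) := hxy
        have hkx := (key_sort_iff hns' f hcard i x).2 ⟨h1, by omega⟩
        have hky := (key_sort_iff hns' f hcard i y).2 ⟨by omega, h2⟩
        exact hst x y hxy (hkx.trans hky.symm)
      · intro j
        refine ⟨f j, fun x h1 h2 => ?_⟩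
        have hkx : partKey n f (x : ℕ) = ((f j : Fin t) : ℕ) := by
          rw [partKey_eq hns']
          have he : (⟨blkIdx n (x : ℕ), blk_lt hns' x⟩ : Fin k) = j :=
            Fin.ext (blkIdx_eq n j.isLt h1 h2)
          rw [he]
        refine (key_sort_iff hns' f hcard (f j) (phi N n f x)).1 ?_
        have : Tuple.sort (fun x : Fin N => partKey n f (x : ℕ)) (phi N n f x) = x := by
          simp [phi]
        rw [this]
        exact hkx
    · -- InjOn
      intro f hf g hg heq
      funext j
      have hcf : ∀ i : Fin t,
          (Finset.univ.filter fun x : Fin N => partKey n f (x : ℕ) = (i : ℕ)).card = m i :=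
        fun i => (card_fiber hns' f i).trans (hf i).symm
      have hcg : ∀ i : Fin t,
          (Finset.univ.filter fun x : Fin N => partKey n g (x : ℕ) = (i : ℕ)).card = m i :=
        fun i => (card_fiber hns' g i).trans (hg i).symm
      have hlt0 : psum n (j : ℕ) < psum n ((j : ℕ) + 1) := by
        rw [psum_succ n j.isLt]
        have : 0 < n ⟨(j : ℕ), j.isLt⟩ := hn _
        omega
      have hx0N : psum n (j : ℕ) < N := lt_of_lt_of_le hlt0 (by
        rw [← hns']; exact psum_mono n j.isLt)
      set x0 : Fin N := ⟨psum n (j : ℕ), hx0N⟩ with hx0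
      have hkf : partKey n f (x0 : ℕ) = ((f j : Fin t) : ℕ) := by
        rw [partKey_eq hns']
        have he : (⟨blkIdx n (x0 : ℕ), blk_lt hns' x0⟩ : Fin k) = j :=
          Fin.ext (blkIdx_eq n j.isLt (le_refl _) hlt0)
        rw [he]
      have hkg : partKey n g (x0 : ℕ) = ((g j : Fin t) : ℕ) := by
        rw [partKey_eq hns']
        have he : (⟨blkIdx n (x0 : ℕ), blk_lt hns' x0⟩ : Fin k) = j :=
          Fin.ext (blkIdx_eq n j.isLt (le_refl _) hlt0)
        rw [he]
      have h1 : psum m ((f j : Fin t) : ℕ) ≤ ((phi N n f x0 : Fin N) : ℕ) ∧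
          ((phi N n f x0 : Fin N) : ℕ) < psum m (((f j : Fin t) : ℕ) + 1) := by
        refine (key_sort_iff hns' f hcf (f j) (phi N n f x0)).1 ?_
        have : Tuple.sort (fun x : Fin N => partKey n f (x : ℕ)) (phi N n f x0) = x0 := by
          simp [phi]
        rw [this]
        exact hkf
      have h2 : psum m ((g j : Fin t) : ℕ) ≤ ((phi N n g x0 : Fin N) : ℕ) ∧
          ((phi N n g x0 : Fin N) : ℕ) < psum m (((g j : Fin t) : ℕ) + 1) := by
        refine (key_sort_iff hns' g hcg (g j) (phi N n g x0)).1 ?_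
        have : Tuple.sort (fun x : Fin N => partKey n g (x : ℕ)) (phi N n g x0) = x0 := by
          simp [phi]
        rw [this]
        exact hkg
      rw [← heq] at h2
      have e1 : blkIdx m ((phi N n f x0 : Fin N) : ℕ) = ((f j : Fin t) : ℕ) :=
        blkIdx_eq m (f j).isLt h1.1 h1.2
      have e2 : blkIdx m ((phi N n f x0 : Fin N) : ℕ) = ((g j : Fin t) : ℕ) :=
        blkIdx_eq m (g j).isLt h2.1 h2.2
      exact Fin.ext (e1.symm.trans e2)
    · -- SurjOn
      intro w hw
      obtain ⟨hw1, hw2, hw3⟩ := hw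
      choose F hF using hw3
      have hkey : ∀ x : Fin N, partKey n F (x : ℕ) = blkIdx m ((w x : Fin N) : ℕ) := by
        intro x
        have hs := blkIdx_spec n (show (x : ℕ) < psum n k by rw [hns']; exact x.isLt)
        have hb := hF ⟨blkIdx n (x : ℕ), hs.1⟩ x hs.2.1 hs.2.2
        rw [partKey_eq hns' F x]
        exact (blkIdx_eq m (F ⟨blkIdx n (x : ℕ), hs.1⟩).isLt hb.1 hb.2).symm
      have hcnt : ∀ i : Fin t,
          (Finset.univ.filter fun x : Fin N => partKey n F (x : ℕ) = (i : ℕ)).card = m i := by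
        intro i
        have e : (Finset.univ.filter fun x : Fin N => partKey n F (x : ℕ) = (i : ℕ))
            = Finset.univ.filter fun x : Fin N => blkIdx m ((w x : Fin N) : ℕ) = (i : ℕ) := by
          apply Finset.filter_congr
          intro x _
          rw [hkey x]
        rw [e, filter_card_comp w (fun y : Fin N => blkIdx m (y : ℕ) = (i : ℕ)),
          card_blk hms' i]
      have hmem : ∀ i : Fin t, m i = ∑ j ∈ Finset.univ.filter (fun j => F j = i), n j :=
        fun i => ((hcnt i).symm.trans (card_fiber hns' F i))
      have hsort : w⁻¹ = Tuple.sort (fun x : Fin N => partKey n F (x : ℕ)) := by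
        rw [Tuple.eq_sort_iff]
        constructor
        · intro a b hab
          show partKey n F ((w⁻¹ a : Fin N) : ℕ) ≤ partKey n F ((w⁻¹ b : Fin N) : ℕ)
          rw [hkey, hkey]
          simp only [Equiv.Perm.coe_inv, Equiv.apply_symm_apply]
          exact blkIdx_mono m hab
        · intro a b hab hk
          have h1 := hkey (w⁻¹ a)
          have h2 := hkey (w⁻¹ b)
          simp only [Equiv.Perm.coe_inv, Equiv.apply_symm_apply] at h1 h2
          have hk' : blkIdx m (a : ℕ) = blkIdx m (b : ℕ) := by
            have hk2 : partKey n F ((w⁻¹ a : Fin N) : ℕ)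
                = partKey n F ((w⁻¹ b : Fin N) : ℕ) := hk
            simp only [Equiv.Perm.coe_inv] at hk2
            rw [h1, h2] at hk2
            exact hk2
          have hsa := blkIdx_spec m (show (a : ℕ) < psum m t by rw [hms']; exact a.isLt)
          have hsb := blkIdx_spec m (show (b : ℕ) < psum m t by rw [hms']; exact b.isLt)
          exact hw2 ⟨blkIdx m (a : ℕ), hsa.1⟩ a b hsa.2.1 hab (by
            show (b : ℕ) < psum m (blkIdx m (a : ℕ) + 1)
            rw [hk']
            exact hsb.2.2)
      refine ⟨F, hmem, ?_⟩
      show phi N n F = w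
      simp only [phi]
      rw [← hsort, inv_inv]


end Stmt11
end
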